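/- Let π = (n_1,…,n_m) (m ≥ 2) be a partition of n and let 0 < ρ ≤ 1. Then there exist constants η_{π,ρ} and η̃_{n,ρ}, depending only on (π,ρ) and on (n,ρ) respectively, with 0 ≤ η_{π,ρ} < η̃_{n,ρ} < 1, such that for every ordering O ∈ B_c^(m), every real symmetric n×n matrix A, and every matrix A' obtained from A by one sweep of the cyclic block Jacobi method defined by the pivot strategy I_O in which all transformation matrices belong to the class UBC_π(ρ), one has S(A')² ≤ η_{π,ρ}·S(A)². -/

import Mathlib

namespace BlockJacobi

open scoped BigOperators

attribute [local instance] Classical.propDecidable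

noncomputable section

/-- Offset (starting index) of block `r` for the partition `c`. -/
def off (c : ℕ → ℕ) (r : ℕ) : ℕ := ∑ k ∈ Finset.range r, c k

/-- `t` belongs to block `r`. -/
def inBlk (c : ℕ → ℕ) (r t : ℕ) : Prop := off c r ≤ t ∧ t < off c r + c r

/-- `s` and `t` belong to the same block (among the first `m` blocks). -/
def sameBlk (c : ℕ → ℕ) (m s t : ℕ) : Prop := ∃ r, r < m ∧ inBlk c r s ∧ inBlk c r t

/-- `t` belongs to the pivot zone: block `i` or block `j`. -/
def inPiv (c : ℕ → ℕ) (i j t : ℕ) : Prop := inBlk c i t ∨ inBlk c j t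

/-- `(c, m)` is a partition of `n` into `m` blocks (0-based blocks `0,…,m-1`). -/
def IsPartition (n m : ℕ) (c : ℕ → ℕ) : Prop :=
  2 ≤ m ∧ (∀ i < m, 1 ≤ c i) ∧ ∑ i ∈ Finset.range m, c i = n

/-- elementary block matrix with (0-based) pivot pair `(i,j)`. -/
def IsElem {n : ℕ} (c : ℕ → ℕ) (i j : ℕ) (U : Matrix (Fin n) (Fin n) ℝ) : Prop :=
  ∀ s t : Fin n, ¬(inPiv c i j (s : ℕ) ∧ inPiv c i j (t : ℕ)) →
    U s t = if s = t then 1 else 0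

/-- orthogonality. -/
def Orth {n : ℕ} (U : Matrix (Fin n) (Fin n) ℝ) : Prop := U.transpose * U = 1

/-- Euclidean norm of a vector. -/
def enorm {ι : Type*} [Fintype ι] (x : ι → ℝ) : ℝ := Real.sqrt (∑ i, x i ^ 2)

/-- smallest singular value of the `(r,r)` diagonal block of `U`. -/
def sigmaMinBlk {n : ℕ} (c : ℕ → ℕ) (r : ℕ) (U : Matrix (Fin n) (Fin n) ℝ) : ℝ :=
  sInf { v : ℝ | ∃ x : Fin n → ℝ,
    (∀ t : Fin n, ¬ inBlk c r (t : ℕ) → x t = 0) ∧ enorm x = 1 ∧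
    enorm (fun t : Fin n => if inBlk c r (t : ℕ) then U.mulVec x t else 0) = v }

/-- the constant `γ_{ij}` of the UBC class. -/
def gammaUBC (c : ℕ → ℕ) (i j : ℕ) : ℝ :=
  3 / Real.sqrt (((4 : ℝ) ^ c i + 6 * (c j : ℝ) - 1) * ((c j : ℝ) + 1))

/-- `U` is in the UBC class with pivot pair `(i,j)`: block structure given by `cs`,
`γ`-bound computed from the partition `cg`. -/
def IsUBC2 {n : ℕ} (cs cg : ℕ → ℕ) (ρ : ℝ) (i j : ℕ) (U : Matrix (Fin n) (Fin n) ℝ) : Prop :=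
  IsElem cs i j U ∧ Orth U ∧ sigmaMinBlk cs i U = sigmaMinBlk cs j U ∧
    ρ * gammaUBC cg i j ≤ sigmaMinBlk cs i U

/-- `U ∈ UBC_π(ρ)` with pivot pair `(i,j)`. -/
def IsUBC {n : ℕ} (c : ℕ → ℕ) (ρ : ℝ) (i j : ℕ) (U : Matrix (Fin n) (Fin n) ℝ) : Prop :=
  IsUBC2 c c ρ i j U

/-- the `(i,j)` pivot submatrix of `A` is diagonal. -/
def PivDiag {n : ℕ} (c : ℕ → ℕ) (i j : ℕ) (A : Matrix (Fin n) (Fin n) ℝ) : Prop :=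
  ∀ s t : Fin n, s ≠ t → inPiv c i j (s : ℕ) → inPiv c i j (t : ℕ) → A s t = 0

/-- square of the off-norm `S(A)`. -/
def offSq {n : ℕ} (A : Matrix (Fin n) (Fin n) ℝ) : ℝ :=
  ∑ s : Fin n, ∑ t : Fin n, if (s : ℕ) < (t : ℕ) then A s t ^ 2 else 0

/-- square of the off-norm of the `(i,j)` pivot submatrix of `A`. -/
def offSqPiv {n : ℕ} (c : ℕ → ℕ) (i j : ℕ) (A : Matrix (Fin n) (Fin n) ℝ) : ℝ :=
  ∑ s : Fin n, ∑ t : Fin n,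
    if (s : ℕ) < (t : ℕ) ∧ inPiv c i j (s : ℕ) ∧ inPiv c i j (t : ℕ) then A s t ^ 2 else 0

/-- Frobenius norm. -/
def frob {n : ℕ} (A : Matrix (Fin n) (Fin n) ℝ) : ℝ :=
  Real.sqrt (∑ s : Fin n, ∑ t : Fin n, A s t ^ 2)

/-- One sweep of the block Jacobi method along the pivot list `L`; block structure from
`cs`, UBC bound computed from the partition `cg`. -/
def Sweep2 {n : ℕ} (cs cg : ℕ → ℕ) (ρ : ℝ) (L : List (ℕ × ℕ))
    (A A' : Matrix (Fin n) (Fin n) ℝ) : Prop :=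
  ∃ B : ℕ → Matrix (Fin n) (Fin n) ℝ,
    B 0 = A ∧ B L.length = A' ∧
    ∀ (k : ℕ) (hk : k < L.length),
      ∃ U : Matrix (Fin n) (Fin n) ℝ,
        IsUBC2 cs cg ρ (L.get ⟨k, hk⟩).1 (L.get ⟨k, hk⟩).2 U ∧
        B (k + 1) = U.transpose * B k * U ∧
        PivDiag cs (L.get ⟨k, hk⟩).1 (L.get ⟨k, hk⟩).2 (B (k + 1))

/-- One sweep of the block Jacobi method with `UBC_π(ρ)` transformations. -/
def Sweep {n : ℕ} (c : ℕ → ℕ) (ρ : ℝ) (L : List (ℕ × ℕ))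
    (A A' : Matrix (Fin n) (Fin n) ℝ) : Prop :=
  Sweep2 c c ρ L A A'

/-- `L ∈ O(P_m)` (0-based pairs). -/
def SeqOn (m : ℕ) (L : List (ℕ × ℕ)) : Prop :=
  (∀ p ∈ L, p.1 < p.2 ∧ p.2 < m) ∧ ∀ i j : ℕ, i < j → j < m → (i, j) ∈ L

/-- `L ∈ O(S)` for `S ⊆ P_m`. -/
def SeqOnSet (S : Set (ℕ × ℕ)) (L : List (ℕ × ℕ)) : Prop :=
  (∀ p ∈ L, p ∈ S) ∧ ∀ p ∈ S, p ∈ L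

/-- the class `B_c^(m)` of column-wise orderings (0-based). -/
def memBc (m : ℕ) (L : List (ℕ × ℕ)) : Prop :=
  ∃ τ : ℕ → ℕ → ℕ,
    (∀ j, Set.BijOn (τ j) (Set.Iio j) (Set.Iio j)) ∧
    L = (List.range' 1 (m - 1)).flatMap fun j => (List.range j).map fun a => (τ j a, j)

/-- the class `B_r^(m)` of row-wise orderings (0-based). -/
def memBr (m : ℕ) (L : List (ℕ × ℕ)) : Prop :=
  ∃ σ : ℕ → ℕ → ℕ,
    (∀ i, Set.BijOn (σ i) (Set.Ico (i + 1) m) (Set.Ico (i + 1) m)) ∧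
    L = ((List.range (m - 1)).reverse).flatMap fun i =>
      (List.range' (i + 1) (m - 1 - i)).map fun b => (i, σ i b)

/-- the class `B_sp^(m)` of serial orderings with permutations. -/
def memBsp (m : ℕ) (L : List (ℕ × ℕ)) : Prop :=
  memBc m L ∨ memBc m L.reverse ∨ memBr m L ∨ memBr m L.reverse

/-- the quasi-cyclic class `B̄_c^(m)`. -/
def memBcQ (m : ℕ) (L : List (ℕ × ℕ)) : Prop :=
  ∃ (τ : ℕ → ℕ → ℕ) (E : ℕ → List (ℕ × ℕ)),
    (∀ j, Set.BijOn (τ j) (Set.Iio j) (Set.Iio j)) ∧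
    (∀ j, ∀ p ∈ E j, p.1 < p.2 ∧ p.2 ≤ j) ∧
    L = (List.range' 1 (m - 1)).flatMap fun j =>
      ((List.range j).map fun a => (τ j a, j)) ++ (if j = 1 then [] else E j)

/-- one admissible transposition (on lists of `α`'s carrying pairs via `pr`). -/
def AdjSwapG {α : Type*} (pr : α → ℕ × ℕ) (L L' : List α) : Prop :=
  ∃ (l₁ l₂ : List α) (a b : α),
    ({(pr a).1, (pr a).2} ∩ {(pr b).1, (pr b).2} : Set ℕ) = ∅ ∧
    L = l₁ ++ a :: b :: l₂ ∧ L' = l₁ ++ b :: a :: l₂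

/-- equivalence (finitely many admissible transpositions). -/
def EquivG {α : Type*} (pr : α → ℕ × ℕ) : List α → List α → Prop :=
  Relation.ReflTransGen (AdjSwapG pr)

/-- shift-equivalence. -/
def ShiftG {α : Type*} (L L' : List α) : Prop :=
  ∃ l₁ l₂ : List α, L = l₁ ++ l₂ ∧ L' = l₂ ++ l₁

/-- weak equivalence. -/
def WeakG {α : Type*} (pr : α → ℕ × ℕ) : List α → List α → Prop :=
  Relation.ReflTransGen fun X Y => EquivG pr X Y ∨ ShiftG X Y

/-- equivalence of pivot sequences. -/
def PEquivL : List (ℕ × ℕ) → List (ℕ × ℕ) → Prop := EquivG id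

/-- shift-equivalence of pivot sequences. -/
def ShiftEq : List (ℕ × ℕ) → List (ℕ × ℕ) → Prop := ShiftG

/-- weak equivalence of pivot sequences. -/
def WeakEq : List (ℕ × ℕ) → List (ℕ × ℕ) → Prop := WeakG id

/-- weak equivalence realized by a chain containing exactly `d` shift-equivalent
adjacent pairs (all other adjacent pairs being equivalent). -/
def WeakChainD (d : ℕ) (L L' : List (ℕ × ℕ)) : Prop :=
  ∃ (r : ℕ) (cs : ℕ → List (ℕ × ℕ)) (s : Finset ℕ),
    cs 0 = L ∧ cs r = L' ∧ s.card = d ∧ (∀ k ∈ s, k < r) ∧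
    ∀ k < r, if k ∈ s then ShiftEq (cs k) (cs (k + 1)) else PEquivL (cs k) (cs (k + 1))

/-- `q` is a permutation of `{0,…,m-1}`. -/
def IsPermOn (m : ℕ) (q : ℕ → ℕ) : Prop := Set.BijOn q (Set.Iio m) (Set.Iio m)

/-- `O(q)`: apply a permutation to all pairs of the sequence. -/
def pApply (q : ℕ → ℕ) (L : List (ℕ × ℕ)) : List (ℕ × ℕ) :=
  L.map fun p => if q p.1 < q p.2 then (q p.1, q p.2) else (q p.2, q p.1)

/-- `compSeq q t = q_t ∘ q_{t-1} ∘ ⋯ ∘ q_1`. -/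
def compSeq (q : ℕ → ℕ → ℕ) : ℕ → ℕ → ℕ
  | 0 => id
  | t + 1 => q (t + 1) ∘ compSeq q t

/-- the class `B_spg^(m)`. -/
def memBspg (m : ℕ) (L : List (ℕ × ℕ)) : Prop :=
  ∃ L' L'' : List (ℕ × ℕ), memBsp m L'' ∧
    ((∃ q, IsPermOn m q ∧ L' = pApply q L) ∧ PEquivL L' L'' ∨
      PEquivL L L' ∧ ∃ q, IsPermOn m q ∧ L'' = pApply q L')

/-- the class `B_sg^(m)` of generalized serial orderings. -/
def memBsg (m : ℕ) (L : List (ℕ × ℕ)) : Prop :=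
  ∃ L' L'' : List (ℕ × ℕ), memBsp m L'' ∧
    ((∃ q, IsPermOn m q ∧ L' = pApply q L) ∧ WeakEq L' L'' ∨
      WeakEq L L' ∧ ∃ q, IsPermOn m q ∧ L'' = pApply q L')

/-- index set of the entries of the off-diagonal blocks in the upper triangle;
it has cardinality `K`. -/
def OffI (n m : ℕ) (c : ℕ → ℕ) : Type :=
  { p : Fin n × Fin n // (p.1 : ℕ) < (p.2 : ℕ) ∧ ¬ sameBlk c m (p.1 : ℕ) (p.2 : ℕ) }

instance (n m : ℕ) (c : ℕ → ℕ) : Fintype (OffI n m c) := by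
  unfold OffI; exact Subtype.fintype _

instance (n m : ℕ) (c : ℕ → ℕ) : DecidableEq (OffI n m c) := Classical.decEq _

/-- `vec_{π,0}⁻¹` : the symmetric matrix with zero diagonal blocks built from a vector. -/
def symOf {n m : ℕ} {c : ℕ → ℕ} (a : OffI n m c → ℝ) : Matrix (Fin n) (Fin n) ℝ :=
  fun s t =>
    if h : (s : ℕ) < (t : ℕ) ∧ ¬ sameBlk c m (s : ℕ) (t : ℕ) then a ⟨(s, t), h⟩
    else if h' : (t : ℕ) < (s : ℕ) ∧ ¬ sameBlk c m (t : ℕ) (s : ℕ) then a ⟨(t, s), h'⟩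
    else 0

/-- `N_{ij}` : set the pivot submatrix to zero. -/
def nij {n : ℕ} (c : ℕ → ℕ) (i j : ℕ) (M : Matrix (Fin n) (Fin n) ℝ) :
    Matrix (Fin n) (Fin n) ℝ :=
  fun s t => if inPiv c i j (s : ℕ) ∧ inPiv c i j (t : ℕ) then 0 else M s t

/-- the block Jacobi annihilator `R_{ij}(Û)` (as a `K×K` matrix), parametrized by the
full elementary block matrix `U` with pivot pair `(i,j)` and pivot submatrix `Û`. -/
def annih (n m : ℕ) (c : ℕ → ℕ) (i j : ℕ) (U : Matrix (Fin n) (Fin n) ℝ) :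
    Matrix (OffI n m c) (OffI n m c) ℝ :=
  fun p q => nij c i j (U.transpose * symOf (Pi.single q (1 : ℝ)) * U) p.1.1 p.1.2

/-- the class `I_{ij}` of block Jacobi annihilators. -/
def Iij (n m : ℕ) (c : ℕ → ℕ) (i j : ℕ) : Set (Matrix (OffI n m c) (OffI n m c) ℝ) :=
  { R | ∃ U : Matrix (Fin n) (Fin n) ℝ, IsElem c i j U ∧ Orth U ∧ R = annih n m c i j U }

/-- the class `I_{ij}^{UBC(ρ)}`. -/
def IijUBC (n m : ℕ) (c : ℕ → ℕ) (ρ : ℝ) (i j : ℕ) :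
    Set (Matrix (OffI n m c) (OffI n m c) ℝ) :=
  { R | ∃ U : Matrix (Fin n) (Fin n) ℝ, IsUBC c ρ i j U ∧ R = annih n m c i j U }

/-- the class `J_O^{UBC_π(ρ)}` of block Jacobi operators. -/
def JopUBC (n m : ℕ) (c : ℕ → ℕ) (ρ : ℝ) (L : List (ℕ × ℕ)) :
    Set (Matrix (OffI n m c) (OffI n m c) ℝ) :=
  { J | ∃ R : ℕ → Matrix (OffI n m c) (OffI n m c) ℝ,
      (∀ (k : ℕ) (hk : k < L.length),
        R k ∈ IijUBC n m c ρ (L.get ⟨k, hk⟩).1 (L.get ⟨k, hk⟩).2) ∧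
      J = (((List.range L.length).reverse).map R).prod }

/-- spectral norm (operator 2-norm). -/
def specNorm {ι : Type*} [Fintype ι] (M : Matrix ι ι ℝ) : ℝ :=
  sSup { v : ℝ | ∃ x : ι → ℝ, enorm x = 1 ∧ enorm (M.mulVec x) = v }

/-- spectral radius. -/
def specRad {ι : Type*} [Fintype ι] (M : Matrix ι ι ℝ) : ℝ :=
  sSup { v : ℝ | ∃ (μ : ℂ) (x : ι → ℂ), x ≠ 0 ∧
    (M.map (fun r : ℝ => (r : ℂ))).mulVec x = μ • x ∧ v = ‖μ‖ }

/-- product `R_{T-1} ⋯ R_1 R_0` of a decorated pivot list. -/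
def prodD {n m : ℕ} {c : ℕ → ℕ}
    (L : List ((ℕ × ℕ) × Matrix (OffI n m c) (OffI n m c) ℝ)) :
    Matrix (OffI n m c) (OffI n m c) ℝ :=
  ((L.map Prod.snd).reverse).prod

/-- plane (Givens) rotation in the `(i,j)` coordinate plane. -/
def rotM (n : ℕ) (i j : ℕ) (φ : ℝ) : Matrix (Fin n) (Fin n) ℝ :=
  fun s t =>
    if (s : ℕ) = i ∧ (t : ℕ) = i then Real.cos φ
    else if (s : ℕ) = j ∧ (t : ℕ) = j then Real.cos φ
    else if (s : ℕ) = i ∧ (t : ℕ) = j then - Real.sin φ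
    else if (s : ℕ) = j ∧ (t : ℕ) = i then Real.sin φ
    else if s = t then 1 else 0

/-- One sweep of the scalar (element-wise) cyclic Jacobi method with rotation
angles in `[-π/4, π/4]`. -/
def ScalarSweep {n : ℕ} (L : List (ℕ × ℕ)) (A A' : Matrix (Fin n) (Fin n) ℝ) : Prop :=
  ∃ (B : ℕ → Matrix (Fin n) (Fin n) ℝ) (φ : ℕ → ℝ),
    B 0 = A ∧ B L.length = A' ∧
    ∀ (k : ℕ) (hk : k < L.length),
      |φ k| ≤ Real.pi / 4 ∧
      B (k + 1) =
        (rotM n (L.get ⟨k, hk⟩).1 (L.get ⟨k, hk⟩).2 (φ k)).transpose * B k *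
          rotM n (L.get ⟨k, hk⟩).1 (L.get ⟨k, hk⟩).2 (φ k) ∧
      ∀ s t : Fin n, (s : ℕ) = (L.get ⟨k, hk⟩).1 → (t : ℕ) = (L.get ⟨k, hk⟩).2 →
        B (k + 1) s t = 0

/-- `k` concatenated copies of a list. -/
def iterList {α : Type*} : ℕ → List α → List α
  | 0, _ => []
  | k + 1, L => L ++ iterList k L

/-! ### Auxiliary development for statement0 -/

section AuxDev

open Finset

variable {n : ℕ}

/-- squared euclidean norm -/
def esq {ι : Type*} [Fintype ι] (x : ι → ℝ) : ℝ := ∑ i, x i ^ 2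

lemma esq_nonneg {ι : Type*} [Fintype ι] (x : ι → ℝ) : 0 ≤ esq x :=
  Finset.sum_nonneg fun _ _ => sq_nonneg _

lemma enorm_sq {ι : Type*} [Fintype ι] (x : ι → ℝ) : (enorm x) ^ 2 = esq x :=
  Real.sq_sqrt (esq_nonneg x)

lemma enorm_nonneg {ι : Type*} [Fintype ι] (x : ι → ℝ) : 0 ≤ enorm x :=
  Real.sqrt_nonneg _

lemma esq_eq_zero_iff {ι : Type*} [Fintype ι] {x : ι → ℝ} : esq x = 0 ↔ x = 0 := by
  constructor
  · intro h
    funext i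
    have h0 : ∀ j ∈ Finset.univ, (0:ℝ) ≤ x j ^ 2 := fun j _ => sq_nonneg _
    have h1 := (Finset.sum_eq_zero_iff_of_nonneg h0).1 h i (Finset.mem_univ i)
    have : x i = 0 := by nlinarith [h1]
    simpa using this
  · rintro rfl; simp [esq]

/-- off is monotone -/
lemma off_mono (c : ℕ → ℕ) {r s : ℕ} (h : r ≤ s) : off c r ≤ off c s := by
  unfold off
  exact Finset.sum_le_sum_of_subset (Finset.range_subset_range.2 h)

lemma off_succ (c : ℕ → ℕ) (r : ℕ) : off c (r + 1) = off c r + c r :=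
  Finset.sum_range_succ c r

/-- distinct blocks are disjoint -/
lemma blk_disjoint (c : ℕ → ℕ) {i j t : ℕ} (hij : i ≠ j)
    (hi : inBlk c i t) (hj : inBlk c j t) : False := by
  rcases Nat.lt_or_ge i j with h | h
  · have h1 : off c i + c i ≤ off c j := by
      rw [← off_succ]; exact off_mono c h
    have h2 := hi.2; have h3 := hj.1; omega
  · have h' : j < i := lt_of_le_of_ne h (Ne.symm hij)
    have h1 : off c j + c j ≤ off c i := by
      rw [← off_succ]; exact off_mono c h'
    have h2 := hj.2; have h3 := hi.1; omega

/-- every index below `off c m` lies in some block -/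
lemma exists_blk (c : ℕ → ℕ) {m t : ℕ} (ht : t < off c m) : ∃ r < m, inBlk c r t := by
  induction m with
  | zero => simp [off] at ht
  | succ m ih =>
    rcases Nat.lt_or_ge t (off c m) with h | h
    · obtain ⟨r, hr, hb⟩ := ih h
      exact ⟨r, Nat.lt_succ_of_lt hr, hb⟩
    · exact ⟨m, Nat.lt_succ_self m, ⟨h, by rwa [← off_succ]⟩⟩

end AuxDev
section AuxDev2

open Finset

variable {n : ℕ}

/-- Finset of indices in block r -/
def blkF (n : ℕ) (c : ℕ → ℕ) (r : ℕ) : Finset (Fin n) :=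
  Finset.univ.filter fun a => inBlk c r (a : ℕ)

def pivF (n : ℕ) (c : ℕ → ℕ) (i j : ℕ) : Finset (Fin n) :=
  Finset.univ.filter fun a => inPiv c i j (a : ℕ)

lemma mem_blkF {c : ℕ → ℕ} {r : ℕ} {a : Fin n} : a ∈ blkF n c r ↔ inBlk c r (a : ℕ) := by
  simp [blkF]

lemma mem_pivF {c : ℕ → ℕ} {i j : ℕ} {a : Fin n} : a ∈ pivF n c i j ↔ inPiv c i j (a : ℕ) := by
  simp [pivF]

lemma blkF_subset_pivF_left {c : ℕ → ℕ} {i j : ℕ} : blkF n c i ⊆ pivF n c i j := by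
  intro a ha; rw [mem_pivF]; exact Or.inl (mem_blkF.1 ha)

lemma blkF_subset_pivF_right {c : ℕ → ℕ} {i j : ℕ} : blkF n c j ⊆ pivF n c i j := by
  intro a ha; rw [mem_pivF]; exact Or.inr (mem_blkF.1 ha)

lemma blkF_disj {c : ℕ → ℕ} {r s : ℕ} (h : r ≠ s) : Disjoint (blkF n c r) (blkF n c s) := by
  rw [Finset.disjoint_left]
  intro a ha hb
  exact blk_disjoint c h (mem_blkF.1 ha) (mem_blkF.1 hb)

lemma pivF_eq_union {c : ℕ → ℕ} {i j : ℕ} : pivF n c i j = blkF n c i ∪ blkF n c j := by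
  ext a; simp [mem_pivF, mem_blkF, inPiv, Finset.mem_union]

/-- block-pair squared mass -/
def Ebl (c : ℕ → ℕ) (r s : ℕ) (M : Matrix (Fin n) (Fin n) ℝ) : ℝ :=
  ∑ a ∈ blkF n c r, ∑ b ∈ blkF n c s, (M a b) ^ 2

lemma Ebl_nonneg (c : ℕ → ℕ) (r s : ℕ) (M : Matrix (Fin n) (Fin n) ℝ) : 0 ≤ Ebl c r s M :=
  Finset.sum_nonneg fun _ _ => Finset.sum_nonneg fun _ _ => sq_nonneg _

/-- off-diagonal mass of the pivot zone -/
def OffPiv (c : ℕ → ℕ) (i j : ℕ) (M : Matrix (Fin n) (Fin n) ℝ) : ℝ :=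
  ∑ a ∈ pivF n c i j, ∑ b ∈ pivF n c i j, if a = b then 0 else (M a b) ^ 2

lemma OffPiv_nonneg (c : ℕ → ℕ) (i j : ℕ) (M : Matrix (Fin n) (Fin n) ℝ) :
    0 ≤ OffPiv c i j M :=
  Finset.sum_nonneg fun _ _ => Finset.sum_nonneg fun _ _ => by positivity

/-- core orthogonality identity, column version -/
lemma core_col {U : Matrix (Fin n) (Fin n) ℝ} (hUU : U * U.transpose = 1)
    (M : Matrix (Fin n) (Fin n) ℝ) (b : Fin n) :
    ∑ a, ((U.transpose * M) a b) ^ 2 = ∑ a, (M a b) ^ 2 := by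
  have key : ∀ p q : Fin n, ∑ a, U p a * U q a = if p = q then 1 else 0 := by
    intro p q
    have h := congrArg (fun X : Matrix (Fin n) (Fin n) ℝ => X p q) hUU
    simpa [Matrix.mul_apply, Matrix.transpose_apply, Matrix.one_apply] using h
  calc ∑ a, ((U.transpose * M) a b) ^ 2
      = ∑ a, ∑ p, ∑ q, (M p b * M q b) * (U p a * U q a) := by
        refine Finset.sum_congr rfl fun a _ => ?_
        rw [Matrix.mul_apply, sq, Finset.sum_mul_sum]
        exact Finset.sum_congr rfl fun p _ => Finset.sum_congr rfl fun q _ => by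
          simp [Matrix.transpose_apply]; ring
    _ = ∑ p, ∑ q, (M p b * M q b) * (∑ a, U p a * U q a) := by
        rw [Finset.sum_comm]
        refine Finset.sum_congr rfl fun p _ => ?_
        rw [Finset.sum_comm]
        refine Finset.sum_congr rfl fun q _ => ?_
        rw [← Finset.mul_sum]
    _ = ∑ p, (M p b) ^ 2 := by
        refine Finset.sum_congr rfl fun p _ => ?_
        have hh : ∀ q : Fin n, (M p b * M q b) * (∑ a, U p a * U q a)
            = if q = p then (M p b) ^ 2 else 0 := by
          intro q
          rw [key p q]
          by_cases h : q = p
          · subst h; simp [sq]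
          · simp [if_neg h, if_neg (Ne.symm h)]
        rw [Finset.sum_congr rfl fun q _ => hh q, Finset.sum_ite_eq' Finset.univ p]
        simp

/-- core orthogonality identity, row version -/
lemma core_row {U : Matrix (Fin n) (Fin n) ℝ} (hUU : U * U.transpose = 1)
    (M : Matrix (Fin n) (Fin n) ℝ) (a : Fin n) :
    ∑ b, ((M * U) a b) ^ 2 = ∑ b, (M a b) ^ 2 := by
  have key : ∀ p q : Fin n, ∑ b, U p b * U q b = if p = q then 1 else 0 := by
    intro p q
    have h := congrArg (fun X : Matrix (Fin n) (Fin n) ℝ => X p q) hUU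
    simpa [Matrix.mul_apply, Matrix.transpose_apply, Matrix.one_apply] using h
  calc ∑ b, ((M * U) a b) ^ 2
      = ∑ b, ∑ p, ∑ q, (M a p * M a q) * (U p b * U q b) := by
        refine Finset.sum_congr rfl fun b _ => ?_
        rw [Matrix.mul_apply, sq, Finset.sum_mul_sum]
        exact Finset.sum_congr rfl fun p _ => Finset.sum_congr rfl fun q _ => by ring
    _ = ∑ p, ∑ q, (M a p * M a q) * (∑ b, U p b * U q b) := by
        rw [Finset.sum_comm]
        refine Finset.sum_congr rfl fun p _ => ?_
        rw [Finset.sum_comm]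
        refine Finset.sum_congr rfl fun q _ => ?_
        rw [← Finset.mul_sum]
    _ = ∑ p, (M a p) ^ 2 := by
        refine Finset.sum_congr rfl fun p _ => ?_
        have hh : ∀ q : Fin n, (M a p * M a q) * (∑ b, U p b * U q b)
            = if q = p then (M a p) ^ 2 else 0 := by
          intro q
          rw [key p q]
          by_cases h : q = p
          · subst h; simp [sq]
          · simp [if_neg h, if_neg (Ne.symm h)]
        rw [Finset.sum_congr rfl fun q _ => hh q, Finset.sum_ite_eq' Finset.univ p]
        simp

/-- entries with row outside the pivot zone are unchanged by `Uᵀ * ·` -/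
lemma ent_col {c : ℕ → ℕ} {i j : ℕ} {U : Matrix (Fin n) (Fin n) ℝ}
    (hE : IsElem c i j U) (M : Matrix (Fin n) (Fin n) ℝ) {a : Fin n}
    (ha : ¬ inPiv c i j (a : ℕ)) (b : Fin n) :
    (U.transpose * M) a b = M a b := by
  rw [Matrix.mul_apply]
  rw [Finset.sum_eq_single a]
  · rw [Matrix.transpose_apply, hE a a (fun h => ha h.1), if_pos rfl, one_mul]
  · intro q _ hq
    rw [Matrix.transpose_apply, hE q a (fun h => ha h.2), if_neg hq, zero_mul]
  · intro h; exact absurd (Finset.mem_univ a) h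

/-- entries with column outside the pivot zone are unchanged by `· * U` -/
lemma ent_row {c : ℕ → ℕ} {i j : ℕ} {U : Matrix (Fin n) (Fin n) ℝ}
    (hE : IsElem c i j U) (M : Matrix (Fin n) (Fin n) ℝ) {b : Fin n}
    (hb : ¬ inPiv c i j (b : ℕ)) (a : Fin n) :
    (M * U) a b = M a b := by
  rw [Matrix.mul_apply]
  rw [Finset.sum_eq_single b]
  · rw [hE b b (fun h => hb h.1), if_pos rfl, mul_one]
  · intro q _ hq
    rw [hE q b (fun h => hb h.2), if_neg hq, mul_zero]
  · intro h; exact absurd (Finset.mem_univ b) h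

/-- pivot-zone restricted column sum preservation -/
lemma piv_col {c : ℕ → ℕ} {i j : ℕ} {U : Matrix (Fin n) (Fin n) ℝ}
    (hUU : U * U.transpose = 1) (hE : IsElem c i j U)
    (M : Matrix (Fin n) (Fin n) ℝ) (b : Fin n) :
    ∑ a ∈ pivF n c i j, ((U.transpose * M) a b) ^ 2 = ∑ a ∈ pivF n c i j, (M a b) ^ 2 := by
  have h1 := core_col hUU M b
  have h2 : ∑ a ∈ Finset.univ.filter (fun a : Fin n => ¬ inPiv c i j (a : ℕ)),
      ((U.transpose * M) a b) ^ 2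
      = ∑ a ∈ Finset.univ.filter (fun a : Fin n => ¬ inPiv c i j (a : ℕ)), (M a b) ^ 2 := by
    refine Finset.sum_congr rfl fun a ha => ?_
    rw [ent_col hE M (Finset.mem_filter.1 ha).2 b]
  have hs : ∀ N : Matrix (Fin n) (Fin n) ℝ,
      ∑ a ∈ pivF n c i j, (N a b) ^ 2
        + ∑ a ∈ Finset.univ.filter (fun a : Fin n => ¬ inPiv c i j (a : ℕ)), (N a b) ^ 2
        = ∑ a, (N a b) ^ 2 := by
    intro N
    exact Finset.sum_filter_add_sum_filter_not Finset.univ _ _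
  have e1 := hs (U.transpose * M)
  have e2 := hs M
  linarith

/-- pivot-zone restricted row sum preservation -/
lemma piv_row {c : ℕ → ℕ} {i j : ℕ} {U : Matrix (Fin n) (Fin n) ℝ}
    (hUU : U * U.transpose = 1) (hE : IsElem c i j U)
    (M : Matrix (Fin n) (Fin n) ℝ) (a : Fin n) :
    ∑ b ∈ pivF n c i j, ((M * U) a b) ^ 2 = ∑ b ∈ pivF n c i j, (M a b) ^ 2 := by
  have h1 := core_row hUU M a
  have h2 : ∑ b ∈ Finset.univ.filter (fun b : Fin n => ¬ inPiv c i j (b : ℕ)),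
      ((M * U) a b) ^ 2
      = ∑ b ∈ Finset.univ.filter (fun b : Fin n => ¬ inPiv c i j (b : ℕ)), (M a b) ^ 2 := by
    refine Finset.sum_congr rfl fun b hb => ?_
    rw [ent_row hE M (Finset.mem_filter.1 hb).2 a]
  have hs : ∀ N : Matrix (Fin n) (Fin n) ℝ,
      ∑ b ∈ pivF n c i j, (N a b) ^ 2
        + ∑ b ∈ Finset.univ.filter (fun b : Fin n => ¬ inPiv c i j (b : ℕ)), (N a b) ^ 2
        = ∑ b, (N a b) ^ 2 := by
    intro N
    exact Finset.sum_filter_add_sum_filter_not Finset.univ _ _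
  have e1 := hs (M * U)
  have e2 := hs M
  linarith

end AuxDev2
section AuxDev3

open Finset

variable {n : ℕ} {c : ℕ → ℕ} {i j : ℕ} {U C : Matrix (Fin n) (Fin n) ℝ}

lemma notPiv_of_blk {r : ℕ} {a : Fin n} (ha : inBlk c r (a : ℕ))
    (hri : r ≠ i) (hrj : r ≠ j) : ¬ inPiv c i j (a : ℕ) := by
  rintro (h | h)
  · exact blk_disjoint c hri ha h
  · exact blk_disjoint c hrj ha h

lemma conj_isSymm (hC : C.IsSymm) : (U.transpose * C * U).IsSymm := by
  unfold Matrix.IsSymm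
  rw [Matrix.transpose_mul, Matrix.transpose_mul, Matrix.transpose_transpose, hC.eq,
    Matrix.mul_assoc]

/-- (S1): entries outside the pivot zone are unchanged -/
lemma step_ent (hE : IsElem c i j U) {a b : Fin n}
    (ha : ¬ inPiv c i j (a : ℕ)) (hb : ¬ inPiv c i j (b : ℕ)) :
    (U.transpose * C * U) a b = C a b := by
  rw [Matrix.mul_assoc, ent_col hE (C * U) ha b, ent_row hE C hb a]

/-- (S2): untouched block pairs -/
lemma step_Ebl_untouched (hE : IsElem c i j U) {r s : ℕ}
    (hri : r ≠ i) (hrj : r ≠ j) (hsi : s ≠ i) (hsj : s ≠ j) :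
    Ebl c r s (U.transpose * C * U) = Ebl c r s C := by
  unfold Ebl
  refine Finset.sum_congr rfl fun a ha => Finset.sum_congr rfl fun b hb => ?_
  rw [step_ent hE (notPiv_of_blk (mem_blkF.1 ha) hri hrj)
    (notPiv_of_blk (mem_blkF.1 hb) hsi hsj)]

/-- pivot-zone column sums over a block column `s` are preserved -/
lemma step_pair_sum (hO : Orth U) (hE : IsElem c i j U) (hij : i ≠ j) {s : ℕ}
    (hsi : s ≠ i) (hsj : s ≠ j) :
    Ebl c i s (U.transpose * C * U) + Ebl c j s (U.transpose * C * U)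
      = Ebl c i s C + Ebl c j s C := by
  have hUU : U * U.transpose = 1 := mul_eq_one_comm.mp hO
  have key : ∀ N : Matrix (Fin n) (Fin n) ℝ,
      Ebl c i s N + Ebl c j s N
        = ∑ b ∈ blkF n c s, ∑ a ∈ pivF n c i j, (N a b) ^ 2 := by
    intro N
    unfold Ebl
    rw [Finset.sum_comm (s := blkF n c i), Finset.sum_comm (s := blkF n c j),
      ← Finset.sum_add_distrib]
    refine Finset.sum_congr rfl fun b _ => ?_
    rw [pivF_eq_union, Finset.sum_union (blkF_disj hij)]
  rw [key, key]
  refine Finset.sum_congr rfl fun b hb => ?_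
  have hbp : ¬ inPiv c i j (b : ℕ) := notPiv_of_blk (mem_blkF.1 hb) hsi hsj
  rw [Matrix.mul_assoc]
  rw [piv_col hUU hE (C * U) b]
  refine Finset.sum_congr rfl fun a _ => ?_
  rw [ent_row hE C hbp a]

/-- (S4): full pivot-zone square sum preserved -/
lemma step_piv_square (hO : Orth U) (hE : IsElem c i j U) :
    ∑ a ∈ pivF n c i j, ∑ b ∈ pivF n c i j, ((U.transpose * C * U) a b) ^ 2
      = ∑ a ∈ pivF n c i j, ∑ b ∈ pivF n c i j, (C a b) ^ 2 := by
  have hUU : U * U.transpose = 1 := mul_eq_one_comm.mp hO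
  have h1 : ∀ b : Fin n,
      ∑ a ∈ pivF n c i j, ((U.transpose * C * U) a b) ^ 2
        = ∑ a ∈ pivF n c i j, ((C * U) a b) ^ 2 := by
    intro b; rw [Matrix.mul_assoc]; exact piv_col hUU hE (C * U) b
  calc ∑ a ∈ pivF n c i j, ∑ b ∈ pivF n c i j, ((U.transpose * C * U) a b) ^ 2
      = ∑ b ∈ pivF n c i j, ∑ a ∈ pivF n c i j, ((U.transpose * C * U) a b) ^ 2 :=
        Finset.sum_comm
    _ = ∑ b ∈ pivF n c i j, ∑ a ∈ pivF n c i j, ((C * U) a b) ^ 2 :=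
        Finset.sum_congr rfl fun b _ => h1 b
    _ = ∑ a ∈ pivF n c i j, ∑ b ∈ pivF n c i j, ((C * U) a b) ^ 2 := Finset.sum_comm
    _ = ∑ a ∈ pivF n c i j, ∑ b ∈ pivF n c i j, (C a b) ^ 2 :=
        Finset.sum_congr rfl fun a _ => piv_row hUU hE C a

def frobSq (M : Matrix (Fin n) (Fin n) ℝ) : ℝ := ∑ a, ∑ b, (M a b) ^ 2

def diagSq (M : Matrix (Fin n) (Fin n) ℝ) : ℝ := ∑ a, (M a a) ^ 2

/-- (S5): Frobenius norm preserved -/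
lemma step_frob (hO : Orth U) : frobSq (U.transpose * C * U) = frobSq C := by
  have hUU : U * U.transpose = 1 := mul_eq_one_comm.mp hO
  unfold frobSq
  calc ∑ a, ∑ b, ((U.transpose * C * U) a b) ^ 2
      = ∑ b, ∑ a, ((U.transpose * (C * U)) a b) ^ 2 := by rw [Finset.sum_comm, Matrix.mul_assoc]
    _ = ∑ b, ∑ a, ((C * U) a b) ^ 2 := Finset.sum_congr rfl fun b _ => core_col hUU (C * U) b
    _ = ∑ a, ∑ b, ((C * U) a b) ^ 2 := Finset.sum_comm
    _ = ∑ a, ∑ b, (C a b) ^ 2 := Finset.sum_congr rfl fun a _ => core_row hUU C a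

/-- (S6): for a symmetric matrix, `2 * offSq = frobSq - diagSq` -/
lemma offSq_symm_formula {M : Matrix (Fin n) (Fin n) ℝ} (hM : M.IsSymm) :
    2 * offSq M = frobSq M - diagSq M := by
  have tri : ∀ a b : Fin n, (M a b) ^ 2
      = (if (a : ℕ) < (b : ℕ) then (M a b) ^ 2 else 0)
        + (if (b : ℕ) < (a : ℕ) then (M a b) ^ 2 else 0)
        + (if a = b then (M a b) ^ 2 else 0) := by
    intro a b
    by_cases h1 : (a : ℕ) < (b : ℕ)
    · have h2 : ¬ (b : ℕ) < (a : ℕ) := by omega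
      have h3 : a ≠ b := fun e => by subst e; omega
      simp [h1, h2, h3]
    · by_cases h2 : (b : ℕ) < (a : ℕ)
      · have h3 : a ≠ b := fun e => by subst e; omega
        simp [h1, h2, h3]
      · have h3 : a = b := Fin.ext (by omega)
        simp [h1, h2, h3]
  have split : frobSq M
      = offSq M + (∑ a : Fin n, ∑ b : Fin n, if (b : ℕ) < (a : ℕ) then (M a b) ^ 2 else 0)
        + diagSq M := by
    unfold frobSq offSq diagSq
    calc ∑ a : Fin n, ∑ b : Fin n, (M a b) ^ 2
        = ∑ a : Fin n, ∑ b : Fin n, ((if (a : ℕ) < (b : ℕ) then (M a b) ^ 2 else 0)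
            + (if (b : ℕ) < (a : ℕ) then (M a b) ^ 2 else 0)
            + (if a = b then (M a b) ^ 2 else 0)) :=
          Finset.sum_congr rfl fun a _ => Finset.sum_congr rfl fun b _ => tri a b
      _ = (∑ a : Fin n, ∑ b : Fin n, if (a : ℕ) < (b : ℕ) then (M a b) ^ 2 else 0)
            + (∑ a : Fin n, ∑ b : Fin n, if (b : ℕ) < (a : ℕ) then (M a b) ^ 2 else 0)
            + (∑ a : Fin n, ∑ b : Fin n, if a = b then (M a b) ^ 2 else 0) := by
          rw [← Finset.sum_add_distrib, ← Finset.sum_add_distrib]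
          refine Finset.sum_congr rfl fun a _ => ?_
          rw [← Finset.sum_add_distrib, ← Finset.sum_add_distrib]
      _ = (∑ a : Fin n, ∑ b : Fin n, if (a : ℕ) < (b : ℕ) then (M a b) ^ 2 else 0)
            + (∑ a : Fin n, ∑ b : Fin n, if (b : ℕ) < (a : ℕ) then (M a b) ^ 2 else 0)
            + ∑ a : Fin n, (M a a) ^ 2 := by
          congr 1
          refine Finset.sum_congr rfl fun a _ => ?_
          rw [Finset.sum_eq_single a]
          · rw [if_pos rfl]
          · intro b _ hb; rw [if_neg (Ne.symm hb)]
          · intro h; exact absurd (Finset.mem_univ a) h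
  have swap : (∑ a : Fin n, ∑ b : Fin n, if (b : ℕ) < (a : ℕ) then (M a b) ^ 2 else 0)
      = offSq M := by
    unfold offSq
    rw [Finset.sum_comm]
    refine Finset.sum_congr rfl fun a _ => Finset.sum_congr rfl fun b _ => ?_
    by_cases h : (a : ℕ) < (b : ℕ)
    · rw [if_pos h, if_pos h, hM.apply b a]
    · rw [if_neg h, if_neg h]
  linarith [split, swap]

/-- decomposition of the pivot square into diagonal and off parts -/
lemma piv_square_decomp (M : Matrix (Fin n) (Fin n) ℝ) :
    ∑ a ∈ pivF n c i j, ∑ b ∈ pivF n c i j, (M a b) ^ 2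
      = (∑ a ∈ pivF n c i j, (M a a) ^ 2) + OffPiv c i j M := by
  unfold OffPiv
  rw [← Finset.sum_add_distrib]
  refine Finset.sum_congr rfl fun a ha => ?_
  have h1 : ∑ b ∈ pivF n c i j, (M a b) ^ 2
      = ∑ b ∈ pivF n c i j, ((if a = b then (M a b) ^ 2 else 0)
          + (if a = b then 0 else (M a b) ^ 2)) := by
    refine Finset.sum_congr rfl fun b _ => ?_
    by_cases h : a = b <;> simp [h]
  rw [h1, Finset.sum_add_distrib]
  congr 1
  rw [Finset.sum_ite_eq (pivF n c i j) a (fun b => (M a b) ^ 2), if_pos ha]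

/-- (S7): diagonal square change -/
lemma step_diag (hO : Orth U) (hE : IsElem c i j U)
    (hPD : PivDiag c i j (U.transpose * C * U)) :
    diagSq (U.transpose * C * U) = diagSq C + OffPiv c i j C := by
  have hs : ∀ N : Matrix (Fin n) (Fin n) ℝ,
      (∑ a ∈ pivF n c i j, (N a a) ^ 2)
        + ∑ a ∈ Finset.univ.filter (fun a : Fin n => ¬ inPiv c i j (a : ℕ)), (N a a) ^ 2
        = diagSq N :=
    fun N => Finset.sum_filter_add_sum_filter_not Finset.univ _ _
  have houter : ∀ a ∈ Finset.univ.filter (fun a : Fin n => ¬ inPiv c i j (a : ℕ)),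
      ((U.transpose * C * U) a a) ^ 2 = (C a a) ^ 2 := by
    intro a ha
    rw [step_ent hE (Finset.mem_filter.1 ha).2 (Finset.mem_filter.1 ha).2]
  have hinner : ∑ a ∈ pivF n c i j, ((U.transpose * C * U) a a) ^ 2
      = (∑ a ∈ pivF n c i j, (C a a) ^ 2) + OffPiv c i j C := by
    have hoffzero : OffPiv c i j (U.transpose * C * U) = 0 := by
      unfold OffPiv
      refine Finset.sum_eq_zero fun a ha => Finset.sum_eq_zero fun b hb => ?_
      by_cases h : a = b
      · rw [if_pos h]
      · rw [if_neg h, hPD a b h (mem_pivF.1 ha) (mem_pivF.1 hb)]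
        norm_num
    have h1 := piv_square_decomp (c := c) (i := i) (j := j) (U.transpose * C * U)
    have h2 := piv_square_decomp (c := c) (i := i) (j := j) C
    have h3 := step_piv_square (C := C) hO hE
    rw [h1, hoffzero, add_zero] at h3
    linarith [h2, h3]
  have e1 := hs (U.transpose * C * U)
  have e2 := hs C
  have e3 : ∑ a ∈ Finset.univ.filter (fun a : Fin n => ¬ inPiv c i j (a : ℕ)),
      ((U.transpose * C * U) a a) ^ 2
      = ∑ a ∈ Finset.univ.filter (fun a : Fin n => ¬ inPiv c i j (a : ℕ)), (C a a) ^ 2 :=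
    Finset.sum_congr rfl houter
  linarith

/-- (S8): one step decreases `offSq` by `OffPiv / 2`. -/
lemma step_offSq (hO : Orth U) (hE : IsElem c i j U) (hC : C.IsSymm)
    (hPD : PivDiag c i j (U.transpose * C * U)) :
    offSq (U.transpose * C * U) = offSq C - OffPiv c i j C / 2 := by
  have h1 := offSq_symm_formula (conj_isSymm (U := U) hC)
  have h2 := offSq_symm_formula hC
  have h3 := step_frob (C := C) hO
  have h4 := step_diag hO hE hPD
  linarith

/-- within-pivot block-pair mass is at most `OffPiv` -/
lemma Ebl_le_OffPiv (hij : i ≠ j) (M : Matrix (Fin n) (Fin n) ℝ) :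
    Ebl c i j M ≤ OffPiv c i j M := by
  unfold Ebl OffPiv
  have h1 : ∀ a ∈ blkF n c i, ∑ b ∈ blkF n c j, (M a b) ^ 2
      = ∑ b ∈ blkF n c j, if a = b then 0 else (M a b) ^ 2 := by
    intro a ha
    refine Finset.sum_congr rfl fun b hb => ?_
    have : a ≠ b := by
      intro e; subst e
      exact blk_disjoint c hij (mem_blkF.1 ha) (mem_blkF.1 hb)
    rw [if_neg this]
  rw [Finset.sum_congr rfl h1]
  have step1 : ∑ a ∈ blkF n c i, ∑ b ∈ blkF n c j, (if a = b then 0 else (M a b) ^ 2)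
      ≤ ∑ a ∈ blkF n c i, ∑ b ∈ pivF n c i j, (if a = b then 0 else (M a b) ^ 2) := by
    refine Finset.sum_le_sum fun a _ => ?_
    refine Finset.sum_le_sum_of_subset_of_nonneg blkF_subset_pivF_right fun b _ _ => ?_
    by_cases h : a = b <;> simp [h, sq_nonneg]
  refine le_trans step1 ?_
  refine Finset.sum_le_sum_of_subset_of_nonneg blkF_subset_pivF_left fun a _ _ => ?_
  refine Finset.sum_nonneg fun b _ => ?_
  by_cases h : a = b <;> simp [h, sq_nonneg]

/-- within-block off-diagonal mass -/
def WithinOff (c : ℕ → ℕ) (r : ℕ) (M : Matrix (Fin n) (Fin n) ℝ) : ℝ :=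
  ∑ a ∈ blkF n c r, ∑ b ∈ blkF n c r, if a = b then 0 else (M a b) ^ 2

lemma WithinOff_nonneg (c : ℕ → ℕ) (r : ℕ) (M : Matrix (Fin n) (Fin n) ℝ) :
    0 ≤ WithinOff c r M :=
  Finset.sum_nonneg fun _ _ => Finset.sum_nonneg fun _ _ => by positivity

lemma WithinOff_le_OffPiv {r : ℕ} (hr : r = i ∨ r = j) (M : Matrix (Fin n) (Fin n) ℝ) :
    WithinOff c r M ≤ OffPiv c i j M := by
  have hsub : blkF n c r ⊆ pivF n c i j := by
    rcases hr with rfl | rfl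
    · exact blkF_subset_pivF_left
    · exact blkF_subset_pivF_right
  unfold WithinOff OffPiv
  have step1 : ∑ a ∈ blkF n c r, ∑ b ∈ blkF n c r, (if a = b then 0 else (M a b) ^ 2)
      ≤ ∑ a ∈ blkF n c r, ∑ b ∈ pivF n c i j, (if a = b then 0 else (M a b) ^ 2) := by
    refine Finset.sum_le_sum fun a _ => ?_
    refine Finset.sum_le_sum_of_subset_of_nonneg hsub fun b _ _ => ?_
    by_cases h : a = b <;> simp [h, sq_nonneg]
  refine le_trans step1 ?_
  refine Finset.sum_le_sum_of_subset_of_nonneg hsub fun a _ _ => ?_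
  refine Finset.sum_nonneg fun b _ => ?_
  by_cases h : a = b <;> simp [h, sq_nonneg]

/-- symmetric matrices have symmetric block masses -/
lemma Ebl_symm (hC : C.IsSymm) (r s : ℕ) : Ebl c r s C = Ebl c s r C := by
  unfold Ebl
  rw [Finset.sum_comm]
  exact Finset.sum_congr rfl fun b _ => Finset.sum_congr rfl fun a _ => by rw [hC.apply]

end AuxDev3
section AuxDev4

open Finset

variable {n : ℕ} {c : ℕ → ℕ}

/-- the subspace of vectors supported on block `r` -/
def suppSub (n : ℕ) (c : ℕ → ℕ) (r : ℕ) : Submodule ℝ (Fin n → ℝ) where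
  carrier := {x | ∀ t : Fin n, ¬ inBlk c r (t : ℕ) → x t = 0}
  add_mem' := by intro a b ha hb t ht; simp only [Pi.add_apply, ha t ht, hb t ht, add_zero]
  zero_mem' := by intro t ht; rfl
  smul_mem' := by intro s x hx t ht; simp only [Pi.smul_apply, hx t ht, smul_zero]

lemma mem_suppSub {r : ℕ} {x : Fin n → ℝ} :
    x ∈ suppSub n c r ↔ ∀ t : Fin n, ¬ inBlk c r (t : ℕ) → x t = 0 := Iff.rfl

/-- projection onto coordinates of block `r` -/
def projL (n : ℕ) (c : ℕ → ℕ) (r : ℕ) : (Fin n → ℝ) →ₗ[ℝ] (Fin n → ℝ) where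
  toFun x := fun t => if inBlk c r (t : ℕ) then x t else 0
  map_add' x y := by
    funext t; by_cases h : inBlk c r (t : ℕ) <;> simp [h]
  map_smul' s x := by
    funext t; by_cases h : inBlk c r (t : ℕ) <;> simp [h]

lemma projL_apply {r : ℕ} (x : Fin n → ℝ) (t : Fin n) :
    projL n c r x t = if inBlk c r (t : ℕ) then x t else 0 := rfl

lemma projL_mem (r : ℕ) (x : Fin n → ℝ) : projL n c r x ∈ suppSub n c r := by
  intro t ht
  rw [projL_apply, if_neg ht]

/-- restricted esq equals block sums -/
lemma esq_projL (r : ℕ) (x : Fin n → ℝ) :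
    esq (projL n c r x) = ∑ t ∈ blkF n c r, (x t) ^ 2 := by
  unfold esq blkF
  rw [Finset.sum_filter]
  refine Finset.sum_congr rfl fun t _ => ?_
  rw [projL_apply]
  by_cases h : inBlk c r (t : ℕ) <;> simp [h]

/-- inner product of two vectors -/
def ipr {ι : Type*} [Fintype ι] (x y : ι → ℝ) : ℝ := ∑ t, x t * y t

lemma esq_add (u w : Fin n → ℝ) : esq (u + w) = esq u + 2 * ipr u w + esq w := by
  unfold esq ipr
  have hterm : ∀ t : Fin n, (u + w) t ^ 2 = u t ^ 2 + 2 * (u t * w t) + w t ^ 2 := by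
    intro t; simp only [Pi.add_apply]; ring
  rw [Finset.sum_congr rfl fun t _ => hterm t, Finset.sum_add_distrib,
    Finset.sum_add_distrib, Finset.mul_sum]

lemma ipr_sq_le (u w : Fin n → ℝ) : (ipr u w) ^ 2 ≤ esq u * esq w :=
  Finset.sum_mul_sq_le_sq_mul_sq Finset.univ u w

/-- lower bound for the squared norm of a perturbed vector -/
lemma esq_add_lower (u w : Fin n → ℝ) : esq u / 2 - esq w ≤ esq (u + w) := by
  have h1 := esq_add u w
  have h2 := ipr_sq_le u w
  have h3 := esq_nonneg u
  have h4 := esq_nonneg w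
  by_cases hp : 0 ≤ ipr u w
  · linarith
  · push_neg at hp
    nlinarith [sq_nonneg (esq u / 2 - 2 * esq w), sq_nonneg (esq u / 2 + 2 * esq w + 2 * ipr u w)]

section Sigma

variable {U : Matrix (Fin n) (Fin n) ℝ} {i j : ℕ} {σ : ℝ}

/-- surjectivity of the compressed block map -/
lemma phi_surj (hσ : 0 < σ)
    (hs : ∀ x ∈ suppSub n c j, σ ^ 2 * esq x ≤ esq (projL n c j (U.mulVec x))) :
    ∀ y ∈ suppSub n c j, ∃ x ∈ suppSub n c j, projL n c j (U.mulVec x) = y := by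
  set φ : (Fin n → ℝ) →ₗ[ℝ] (Fin n → ℝ) := (projL n c j).comp U.mulVecLin with hφ
  have hmap : ∀ x ∈ suppSub n c j, φ x ∈ suppSub n c j := by
    intro x _
    exact projL_mem j _
  set e : suppSub n c j →ₗ[ℝ] suppSub n c j := φ.restrict hmap with he
  have hinj : Function.Injective e := by
    rw [← LinearMap.ker_eq_bot, LinearMap.ker_eq_bot']
    intro x hx
    have hx' : φ (x : Fin n → ℝ) = 0 := by
      have := congrArg (fun z : suppSub n c j => (z : Fin n → ℝ)) hx
      simpa [he, LinearMap.restrict_apply] using this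
    have h0 : esq (projL n c j (U.mulVec (x : Fin n → ℝ))) = 0 := by
      have : projL n c j (U.mulVec (x : Fin n → ℝ)) = 0 := by
        simpa [hφ, LinearMap.comp_apply, Matrix.mulVecLin_apply] using hx'
      rw [this]; simp [esq]
    have h1 := hs (x : Fin n → ℝ) x.2
    rw [h0] at h1
    have h2 : esq (x : Fin n → ℝ) = 0 := by
      have h3 := esq_nonneg (x : Fin n → ℝ)
      nlinarith [pow_pos hσ 2]
    exact Subtype.ext (esq_eq_zero_iff.1 h2)
  have hsurj : Function.Surjective e := (LinearMap.injective_iff_surjective).1 hinj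
  intro y hy
  obtain ⟨x, hx⟩ := hsurj ⟨y, hy⟩
  refine ⟨(x : Fin n → ℝ), x.2, ?_⟩
  have := congrArg (fun z : suppSub n c j => (z : Fin n → ℝ)) hx
  simpa [he, LinearMap.restrict_apply, hφ, LinearMap.comp_apply, Matrix.mulVecLin_apply]
    using this

/-- transposed sigma bound -/
lemma sigma_transpose (hσ : 0 < σ)
    (hs : ∀ x ∈ suppSub n c j, σ ^ 2 * esq x ≤ esq (projL n c j (U.mulVec x))) :
    ∀ y ∈ suppSub n c j,
      σ ^ 2 * esq y ≤ esq (projL n c j (U.transpose.mulVec y)) := by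
  intro y hy
  obtain ⟨x, hx, hfx⟩ := phi_surj hσ hs y hy
  by_cases h0 : esq y = 0
  · rw [h0, mul_zero]
    exact esq_nonneg _
  have hyne : 0 < esq y := lt_of_le_of_ne (esq_nonneg y) (Ne.symm h0)
  -- inner product identity
  have hip : ipr (projL n c j (U.transpose.mulVec y)) x = ipr y (projL n c j (U.mulVec x)) := by
    unfold ipr
    have lhs_eq : ∀ t : Fin n, projL n c j (U.transpose.mulVec y) t * x t
        = (U.transpose.mulVec y) t * x t := by
      intro t
      rw [projL_apply]
      by_cases h : inBlk c j (t : ℕ)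
      · rw [if_pos h]
      · rw [if_neg h, hx t h, mul_zero, mul_zero]
    have rhs_eq : ∀ s : Fin n, y s * projL n c j (U.mulVec x) s = y s * (U.mulVec x) s := by
      intro s
      rw [projL_apply]
      by_cases h : inBlk c j (s : ℕ)
      · rw [if_pos h]
      · rw [if_neg h, hy s h, zero_mul, zero_mul]
    rw [Finset.sum_congr rfl fun t _ => lhs_eq t, Finset.sum_congr rfl fun s _ => rhs_eq s]
    calc ∑ t, (U.transpose.mulVec y) t * x t
        = ∑ t, (∑ s, U s t * y s) * x t := by
          refine Finset.sum_congr rfl fun t _ => ?_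
          simp only [Matrix.mulVec, dotProduct, Matrix.transpose_apply]
      _ = ∑ s, ∑ t, U s t * y s * x t := by
          rw [Finset.sum_comm]
          exact Finset.sum_congr rfl fun t _ => by rw [Finset.sum_mul]
      _ = ∑ s, y s * (U.mulVec x) s := by
          refine Finset.sum_congr rfl fun s _ => ?_
          simp only [Matrix.mulVec, dotProduct, Finset.mul_sum]
          exact Finset.sum_congr rfl fun t _ => by ring
  rw [hfx] at hip
  have hyy : ipr y y = esq y := by
    unfold ipr esq
    exact Finset.sum_congr rfl fun t _ => (sq (y t)).symm ▸ by ring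
  rw [hyy] at hip
  -- Cauchy-Schwarz
  have hcs := ipr_sq_le (projL n c j (U.transpose.mulVec y)) x
  rw [hip] at hcs
  have hlow := hs x hx
  rw [hfx] at hlow
  have hex : 0 ≤ esq x := esq_nonneg x
  have heψ : 0 ≤ esq (projL n c j (U.transpose.mulVec y)) := esq_nonneg _
  nlinarith [hcs, hlow, hyne, hex, heψ]

end Sigma

end AuxDev4
section AuxDev5

open Finset

variable {n : ℕ} {c : ℕ → ℕ} {U : Matrix (Fin n) (Fin n) ℝ} {i j : ℕ} {σ : ℝ}

lemma esq_mulVec_transpose (hUU : U * U.transpose = 1) (z : Fin n → ℝ) :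
    esq (U.transpose.mulVec z) = esq z := by
  have key : ∀ p q : Fin n, ∑ t, U p t * U q t = if p = q then 1 else 0 := by
    intro p q
    have h := congrArg (fun X : Matrix (Fin n) (Fin n) ℝ => X p q) hUU
    simpa [Matrix.mul_apply, Matrix.transpose_apply, Matrix.one_apply] using h
  unfold esq
  calc ∑ t, (U.transpose.mulVec z t) ^ 2
      = ∑ t, ∑ p, ∑ q, (z p * z q) * (U p t * U q t) := by
        refine Finset.sum_congr rfl fun t _ => ?_
        simp only [Matrix.mulVec, dotProduct, Matrix.transpose_apply]
        rw [sq, Finset.sum_mul_sum]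
        exact Finset.sum_congr rfl fun p _ => Finset.sum_congr rfl fun q _ => by ring
    _ = ∑ p, ∑ q, (z p * z q) * (∑ t, U p t * U q t) := by
        rw [Finset.sum_comm]
        refine Finset.sum_congr rfl fun p _ => ?_
        rw [Finset.sum_comm]
        refine Finset.sum_congr rfl fun q _ => ?_
        rw [← Finset.mul_sum]
    _ = ∑ p, (z p) ^ 2 := by
        refine Finset.sum_congr rfl fun p _ => ?_
        have hh : ∀ q : Fin n, (z p * z q) * (∑ t, U p t * U q t)
            = if q = p then (z p) ^ 2 else 0 := by
          intro q
          rw [key p q]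
          by_cases h : q = p
          · subst h; simp [sq]
          · simp [if_neg h, if_neg (Ne.symm h)]
        rw [Finset.sum_congr rfl fun q _ => hh q, Finset.sum_ite_eq' Finset.univ p]
        simp

lemma esq_projL_le (r : ℕ) (v : Fin n → ℝ) : esq (projL n c r v) ≤ esq v := by
  unfold esq
  refine Finset.sum_le_sum fun t _ => ?_
  rw [projL_apply]
  by_cases h : inBlk c r (t : ℕ) <;> simp [h, sq_nonneg]

/-- Ebl in column-first form -/
lemma Ebl_col_form (r s : ℕ) (M : Matrix (Fin n) (Fin n) ℝ) :
    Ebl c r s M = ∑ b ∈ blkF n c s, ∑ a ∈ blkF n c r, (M a b) ^ 2 := by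
  unfold Ebl; exact Finset.sum_comm

lemma esq_projL_col (r : ℕ) (M : Matrix (Fin n) (Fin n) ℝ) (b : Fin n) :
    esq (projL n c r (fun t => M t b)) = ∑ t ∈ blkF n c r, (M t b) ^ 2 :=
  esq_projL r _

/-- (S9) the key σ-lower bound for the pivot-row block mass -/
lemma step_sigma (hO : Orth U) (hE : IsElem c i j U) (hij : i ≠ j) (hσ : 0 < σ)
    (hs : ∀ x ∈ suppSub n c j, σ ^ 2 * esq x ≤ esq (projL n c j (U.mulVec x)))
    {r : ℕ} (hri : r ≠ i) (hrj : r ≠ j) (C : Matrix (Fin n) (Fin n) ℝ) :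
    σ ^ 2 / 2 * Ebl c j r C - Ebl c i r C ≤ Ebl c j r (U.transpose * C * U) := by
  have hUU : U * U.transpose = 1 := mul_eq_one_comm.mp hO
  have key : ∀ b ∈ blkF n c r,
      σ ^ 2 / 2 * (∑ t ∈ blkF n c j, (C t b) ^ 2) - (∑ t ∈ blkF n c i, (C t b) ^ 2)
        ≤ ∑ t ∈ blkF n c j, ((U.transpose * C * U) t b) ^ 2 := by
    intro b hb
    have hbp : ¬ inPiv c i j (b : ℕ) := notPiv_of_blk (mem_blkF.1 hb) hri hrj
    set yb := projL n c j (fun t => C t b) with hyb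
    set y'b := projL n c i (fun t => C t b) with hy'b
    set u := projL n c j (U.transpose.mulVec yb) with hu
    set w := projL n c j (U.transpose.mulVec y'b) with hw
    have hcol : projL n c j (fun t => (U.transpose * C * U) t b) = u + w := by
      funext t
      rw [projL_apply]
      by_cases ht : inBlk c j (t : ℕ)
      · rw [if_pos ht]
        have htp : inPiv c i j (t : ℕ) := Or.inr ht
        have hCU : ∀ s : Fin n, (C * U) s b = C s b := fun s => ent_row hE C hbp s
        have lhs_eq : (U.transpose * C * U) t b = ∑ s, U s t * C s b := by
          rw [Matrix.mul_assoc, Matrix.mul_apply]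
          refine Finset.sum_congr rfl fun s _ => ?_
          rw [Matrix.transpose_apply, hCU s]
        rw [lhs_eq]
        have rhs_eq : (u + w) t = ∑ s, U s t * (yb s + y'b s) := by
          simp only [Pi.add_apply, hu, hw, projL_apply, if_pos ht]
          simp only [Matrix.mulVec, dotProduct, Matrix.transpose_apply]
          rw [← Finset.sum_add_distrib]
          exact Finset.sum_congr rfl fun s _ => by ring
        rw [rhs_eq]
        refine Finset.sum_congr rfl fun s _ => ?_
        by_cases hsj : inBlk c j (s : ℕ)
        · have : ¬ inBlk c i (s : ℕ) := fun h => blk_disjoint c hij h hsj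
          simp only [hyb, hy'b, projL_apply, if_pos hsj, if_neg this, add_zero]
        · by_cases hsi : inBlk c i (s : ℕ)
          · simp only [hyb, hy'b, projL_apply, if_neg hsj, if_pos hsi, zero_add]
          · have hsp : ¬ inPiv c i j (s : ℕ) := by rintro (h | h) <;> [exact hsi h; exact hsj h]
            have hU0 : U s t = 0 := by
              rw [hE s t (fun h => hsp h.1)]
              have : s ≠ t := fun e => by subst e; exact hsj ht
              rw [if_neg this]
            simp only [hyb, hy'b, projL_apply, if_neg hsj, if_neg hsi, hU0, add_zero,
              zero_mul, mul_zero]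
      · rw [if_neg ht]
        have : (u + w) t = 0 := by
          simp only [Pi.add_apply, hu, hw, projL_apply, if_neg ht, add_zero]
        rw [this]
    have hlow : σ ^ 2 * esq yb ≤ esq u := sigma_transpose hσ hs yb (projL_mem j _)
    have hup : esq w ≤ esq y'b := le_trans (esq_projL_le j _) (by
      rw [esq_mulVec_transpose hUU])
    have hadd : esq u / 2 - esq w ≤ esq (u + w) := esq_add_lower u w
    have hcol' : esq (u + w) = ∑ t ∈ blkF n c j, ((U.transpose * C * U) t b) ^ 2 := by
      rw [← hcol]; exact esq_projL_col j _ b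
    have h1 : esq yb = ∑ t ∈ blkF n c j, (C t b) ^ 2 := esq_projL_col j C b
    have h2 : esq y'b = ∑ t ∈ blkF n c i, (C t b) ^ 2 := esq_projL_col i C b
    rw [← hcol', ← h1, ← h2]
    linarith
  rw [Ebl_col_form j r C, Ebl_col_form i r C, Ebl_col_form j r (U.transpose * C * U)]
  rw [Finset.mul_sum, ← Finset.sum_sub_distrib]
  exact Finset.sum_le_sum key

end AuxDev5
section AuxDev6

open Finset

variable {n : ℕ} {c : ℕ → ℕ}

lemma esq_smul (a : ℝ) (x : Fin n → ℝ) : esq (a • x) = a ^ 2 * esq x := by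
  unfold esq
  rw [Finset.mul_sum]
  refine Finset.sum_congr rfl fun t _ => ?_
  simp [Pi.smul_apply, smul_eq_mul]; ring

lemma enorm_smul (a : ℝ) (x : Fin n → ℝ) : enorm (a • x) = |a| * enorm x := by
  unfold enorm
  have h : ∑ t, (a • x) t ^ 2 = a ^ 2 * ∑ t, x t ^ 2 := by
    rw [Finset.mul_sum]
    refine Finset.sum_congr rfl fun t _ => ?_
    simp [Pi.smul_apply, smul_eq_mul]; ring
  rw [h, Real.sqrt_mul (sq_nonneg a), Real.sqrt_sq_eq_abs]

lemma esq_enorm_sq (x : Fin n → ℝ) : esq x = (enorm x) ^ 2 := (enorm_sq x).symm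

/-- pointwise consequence of the `sigmaMinBlk` lower bound -/
lemma sig_pointwise {r : ℕ} {U : Matrix (Fin n) (Fin n) ℝ} {s : ℝ} (hs0 : 0 ≤ s)
    (hbound : s ≤ sigmaMinBlk c r U) :
    ∀ x ∈ suppSub n c r, s ^ 2 * esq x ≤ esq (projL n c r (U.mulVec x)) := by
  intro x hx
  by_cases h0 : esq x = 0
  · have : x = 0 := esq_eq_zero_iff.1 h0
    subst this
    rw [h0, mul_zero]
    exact esq_nonneg _
  have hex : 0 < esq x := lt_of_le_of_ne (esq_nonneg x) (Ne.symm h0)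
  set t := enorm x with htdef
  have ht : 0 < t := Real.sqrt_pos.2 hex
  set x₀ := t⁻¹ • x with hx₀
  have hx₀supp : ∀ u : Fin n, ¬ inBlk c r (u : ℕ) → x₀ u = 0 := by
    intro u hu
    simp [hx₀, Pi.smul_apply, hx u hu]
  have hx₀norm : enorm x₀ = 1 := by
    rw [hx₀, enorm_smul, abs_of_pos (inv_pos.2 ht), ← htdef, inv_mul_cancel₀ (ne_of_gt ht)]
  set v := enorm (fun u : Fin n => if inBlk c r (u : ℕ) then U.mulVec x₀ u else 0) with hv
  have hvmem : v ∈ { w : ℝ | ∃ y : Fin n → ℝ,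
      (∀ u : Fin n, ¬ inBlk c r (u : ℕ) → y u = 0) ∧ enorm y = 1 ∧
      enorm (fun u : Fin n => if inBlk c r (u : ℕ) then U.mulVec y u else 0) = w } :=
    ⟨x₀, hx₀supp, hx₀norm, rfl⟩
  have hbdd : BddBelow { w : ℝ | ∃ y : Fin n → ℝ,
      (∀ u : Fin n, ¬ inBlk c r (u : ℕ) → y u = 0) ∧ enorm y = 1 ∧
      enorm (fun u : Fin n => if inBlk c r (u : ℕ) then U.mulVec y u else 0) = w } := by
    refine ⟨0, fun w hw => ?_⟩
    obtain ⟨y, _, _, rfl⟩ := hw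
    exact enorm_nonneg _
  have hsv : s ≤ v := le_trans hbound (csInf_le hbdd hvmem)
  have hproj : projL n c r (U.mulVec x) = t • projL n c r (U.mulVec x₀) := by
    have hxx : x = t • x₀ := by
      rw [hx₀, smul_smul, mul_inv_cancel₀ (ne_of_gt ht), one_smul]
    rw [hxx, Matrix.mulVec_smul, map_smul]
  have hps : projL n c r (U.mulVec x₀)
      = (fun u : Fin n => if inBlk c r (u : ℕ) then U.mulVec x₀ u else 0) := by
    funext u; rw [projL_apply]
  have hv2 : esq (projL n c r (U.mulVec x₀)) = v ^ 2 := by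
    rw [hps, hv, esq_enorm_sq]
  have : esq (projL n c r (U.mulVec x)) = t ^ 2 * v ^ 2 := by
    rw [hproj, esq_smul, hv2]
  rw [this]
  have htx : esq x = t ^ 2 := esq_enorm_sq x
  rw [htx]
  have hsv2 : s ^ 2 ≤ v ^ 2 := by nlinarith [hsv, hs0]
  nlinarith [sq_nonneg t, hsv2, ht]

end AuxDev6
section AuxDev7

open Finset

variable {n : ℕ} {c : ℕ → ℕ}

/-- minimal value of `gammaUBC` over blocks of size at most `n` -/
def gmin (n : ℕ) : ℝ := 3 / Real.sqrt (((4 : ℝ) ^ n + 6 * (n : ℝ) - 1) * ((n : ℝ) + 1))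

lemma four_pow_ge_one (k : ℕ) : (1 : ℝ) ≤ (4 : ℝ) ^ k := one_le_pow₀ (by norm_num)

lemma gmin_arg_pos {n : ℕ} (hn : 1 ≤ n) :
    0 < ((4 : ℝ) ^ n + 6 * (n : ℝ) - 1) * ((n : ℝ) + 1) := by
  have h1 := four_pow_ge_one n
  have h2 : (1 : ℝ) ≤ (n : ℝ) := by exact_mod_cast hn
  nlinarith

lemma gmin_pos {n : ℕ} (hn : 1 ≤ n) : 0 < gmin n := by
  unfold gmin
  exact div_pos (by norm_num) (Real.sqrt_pos.2 (gmin_arg_pos hn))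

lemma gmin_le_one {n : ℕ} (hn : 2 ≤ n) : gmin n ≤ 1 := by
  unfold gmin
  have h2 : (2 : ℝ) ≤ (n : ℝ) := by exact_mod_cast hn
  have h1 := four_pow_ge_one n
  have harg : (9 : ℝ) ≤ ((4 : ℝ) ^ n + 6 * (n : ℝ) - 1) * ((n : ℝ) + 1) := by nlinarith
  have hsq : (3 : ℝ) ≤ Real.sqrt (((4 : ℝ) ^ n + 6 * (n : ℝ) - 1) * ((n : ℝ) + 1)) := by
    have : (3 : ℝ) = Real.sqrt 9 := by
      rw [show (9 : ℝ) = 3 ^ 2 by norm_num, Real.sqrt_sq (by norm_num : (0:ℝ) ≤ 3)]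
    rw [this]
    exact Real.sqrt_le_sqrt harg
  rw [div_le_one (by linarith)]
  exact hsq

lemma gamma_ge_gmin {i j : ℕ} (hci : c i ≤ n) (hcj : c j ≤ n) (hcj1 : 1 ≤ c j)
    (hci1 : 1 ≤ c i) : gmin n ≤ gammaUBC c i j := by
  unfold gmin gammaUBC
  have hci' : ((c i : ℝ)) ≤ (n : ℝ) := by exact_mod_cast hci
  have hcj' : ((c j : ℝ)) ≤ (n : ℝ) := by exact_mod_cast hcj
  have hcj1' : (1 : ℝ) ≤ (c j : ℝ) := by exact_mod_cast hcj1
  have hpow : (4 : ℝ) ^ (c i) ≤ (4 : ℝ) ^ n := by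
    exact pow_le_pow_right₀ (by norm_num) hci
  have h4ci : (4 : ℝ) ≤ (4 : ℝ) ^ (c i) := by
    calc (4 : ℝ) = 4 ^ 1 := (pow_one 4).symm
    _ ≤ 4 ^ (c i) := pow_le_pow_right₀ (by norm_num) hci1
  have hargpos : 0 < ((4 : ℝ) ^ (c i) + 6 * (c j : ℝ) - 1) * ((c j : ℝ) + 1) := by nlinarith
  have hle : ((4 : ℝ) ^ (c i) + 6 * (c j : ℝ) - 1) * ((c j : ℝ) + 1)
      ≤ ((4 : ℝ) ^ n + 6 * (n : ℝ) - 1) * ((n : ℝ) + 1) := by nlinarith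
  have hsqle : Real.sqrt (((4 : ℝ) ^ (c i) + 6 * (c j : ℝ) - 1) * ((c j : ℝ) + 1))
      ≤ Real.sqrt (((4 : ℝ) ^ n + 6 * (n : ℝ) - 1) * ((n : ℝ) + 1)) :=
    Real.sqrt_le_sqrt hle
  have hsqpos : 0 < Real.sqrt (((4 : ℝ) ^ (c i) + 6 * (c j : ℝ) - 1) * ((c j : ℝ) + 1)) :=
    Real.sqrt_pos.2 hargpos
  exact div_le_div_of_nonneg_left (by norm_num) hsqpos hsqle

/-- all the data we need about one transformation -/
structure GoodStep (n : ℕ) (c : ℕ → ℕ) (σ : ℝ) (i j : ℕ) (U : Matrix (Fin n) (Fin n) ℝ) :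
    Prop where
  elem : IsElem c i j U
  orth : Orth U
  sigi : ∀ x ∈ suppSub n c i, σ ^ 2 * esq x ≤ esq (projL n c i (U.mulVec x))
  sigj : ∀ x ∈ suppSub n c j, σ ^ 2 * esq x ≤ esq (projL n c j (U.mulVec x))

lemma ubc_to_good {ρ σ : ℝ} {i j : ℕ} {U : Matrix (Fin n) (Fin n) ℝ}
    (hσ0 : 0 ≤ σ) (hσle : σ ≤ ρ * gammaUBC c i j) (hU : IsUBC2 c c ρ i j U) :
    GoodStep n c σ i j U := by
  obtain ⟨hE, hO, heq, hb⟩ := hU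
  refine ⟨hE, hO, ?_, ?_⟩
  · exact sig_pointwise hσ0 (le_trans hσle hb)
  · exact sig_pointwise hσ0 (le_trans hσle (heq ▸ hb))

/-- chain of block Jacobi steps along a pivot list -/
def JChain (c : ℕ → ℕ) (σ : ℝ) :
    List (ℕ × ℕ) → Matrix (Fin n) (Fin n) ℝ → Matrix (Fin n) (Fin n) ℝ → Prop
  | [], A, A' => A' = A
  | p :: l, A, A' => ∃ U : Matrix (Fin n) (Fin n) ℝ, GoodStep n c σ p.1 p.2 U ∧
      PivDiag c p.1 p.2 (U.transpose * A * U) ∧ JChain c σ l (U.transpose * A * U) A'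

lemma jchain_nil {σ : ℝ} {A A' : Matrix (Fin n) (Fin n) ℝ} :
    JChain c σ [] A A' ↔ A' = A := Iff.rfl

lemma jchain_cons {σ : ℝ} {p : ℕ × ℕ} {l : List (ℕ × ℕ)}
    {A A' : Matrix (Fin n) (Fin n) ℝ} :
    JChain c σ (p :: l) A A' ↔
      ∃ U : Matrix (Fin n) (Fin n) ℝ, GoodStep n c σ p.1 p.2 U ∧
        PivDiag c p.1 p.2 (U.transpose * A * U) ∧ JChain c σ l (U.transpose * A * U) A' :=
  Iff.rfl

lemma jchain_append {σ : ℝ} : ∀ (l₁ l₂ : List (ℕ × ℕ)) (A A' : Matrix (Fin n) (Fin n) ℝ),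
    JChain c σ (l₁ ++ l₂) A A' ↔ ∃ M, JChain c σ l₁ A M ∧ JChain c σ l₂ M A' := by
  intro l₁
  induction l₁ with
  | nil =>
    intro l₂ A A'
    simp only [List.nil_append, jchain_nil]
    constructor
    · intro h; exact ⟨A, rfl, h⟩
    · rintro ⟨M, rfl, h⟩; exact h
  | cons p l ih =>
    intro l₂ A A'
    simp only [List.cons_append, jchain_cons]
    constructor
    · rintro ⟨U, hU, hPD, hrest⟩
      obtain ⟨M, h1, h2⟩ := (ih l₂ _ A').1 hrest
      exact ⟨M, ⟨U, hU, hPD, h1⟩, h2⟩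
    · rintro ⟨M, ⟨U, hU, hPD, h1⟩, h2⟩
      exact ⟨U, hU, hPD, (ih l₂ _ A').2 ⟨M, h1, h2⟩⟩

lemma jchain_symm {σ : ℝ} : ∀ (l : List (ℕ × ℕ)) {A A' : Matrix (Fin n) (Fin n) ℝ},
    JChain c σ l A A' → A.IsSymm → A'.IsSymm := by
  intro l
  induction l with
  | nil => intro A A' h hA; rw [h]; exact hA
  | cons p l ih =>
    rintro A A' ⟨U, hU, hPD, hrest⟩ hA
    exact ih hrest (conj_isSymm hA)

lemma jchain_offSq_mono {σ : ℝ} : ∀ (l : List (ℕ × ℕ)) {A A' : Matrix (Fin n) (Fin n) ℝ},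
    JChain c σ l A A' → A.IsSymm → offSq A' ≤ offSq A := by
  intro l
  induction l with
  | nil => intro A A' h hA; rw [h]
  | cons p l ih =>
    rintro A A' ⟨U, hU, hPD, hrest⟩ hA
    have h1 := step_offSq hU.orth hU.elem hA hPD
    have h2 := ih hrest (conj_isSymm hA)
    have h3 := OffPiv_nonneg c p.1 p.2 A
    linarith

lemma jchain_Ebl_untouched {σ : ℝ} {r s : ℕ} :
    ∀ (l : List (ℕ × ℕ)) {A A' : Matrix (Fin n) (Fin n) ℝ},
    JChain c σ l A A' → (∀ p ∈ l, p.1 ≠ r ∧ p.1 ≠ s ∧ p.2 ≠ r ∧ p.2 ≠ s) →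
    Ebl c r s A' = Ebl c r s A := by
  intro l
  induction l with
  | nil => intro A A' h _; rw [h]
  | cons p l ih =>
    rintro A A' ⟨U, hU, hPD, hrest⟩ hp
    obtain ⟨h1, h2, h3, h4⟩ := hp p (List.mem_cons_self)
    rw [ih hrest (fun q hq => hp q (List.mem_cons_of_mem p hq))]
    exact step_Ebl_untouched hU.elem (Ne.symm h1) (Ne.symm h3) (Ne.symm h2) (Ne.symm h4)

/-- conservation of column sums over a closed index set -/
lemma jchain_conserve {σ : ℝ} {T : Finset ℕ} {jj : ℕ} :
    ∀ (l : List (ℕ × ℕ)) {A A' : Matrix (Fin n) (Fin n) ℝ},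
    JChain c σ l A A' → A.IsSymm →
    (∀ p ∈ l, p.1 ∈ T ∧ p.2 ∈ T ∧ p.1 ≠ p.2) → jj ∉ T →
    ∑ r ∈ T, Ebl c r jj A' = ∑ r ∈ T, Ebl c r jj A := by
  intro l
  induction l with
  | nil => intro A A' h _ _ _; rw [h]
  | cons p l ih =>
    rintro A A' ⟨U, hU, hPD, hrest⟩ hA hp hjj
    obtain ⟨hi, hj, hij⟩ := hp p (List.mem_cons_self)
    rw [ih hrest (conj_isSymm hA) (fun q hq => hp q (List.mem_cons_of_mem p hq)) hjj]
    -- one step conservation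
    have hjji : jj ≠ p.1 := fun h => hjj (h ▸ hi)
    have hjjj : jj ≠ p.2 := fun h => hjj (h ▸ hj)
    set A₁ := U.transpose * A * U with hA₁
    have split : ∀ N : Matrix (Fin n) (Fin n) ℝ,
        ∑ r ∈ T, Ebl c r jj N
          = Ebl c p.1 jj N + (Ebl c p.2 jj N
              + ∑ r ∈ (T.erase p.1).erase p.2, Ebl c r jj N) := by
      intro N
      rw [← Finset.add_sum_erase T _ hi,
        ← Finset.add_sum_erase (T.erase p.1) _ (Finset.mem_erase.2 ⟨Ne.symm hij, hj⟩)]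
    rw [split, split]
    have hrestu : ∑ r ∈ (T.erase p.1).erase p.2, Ebl c r jj A₁
        = ∑ r ∈ (T.erase p.1).erase p.2, Ebl c r jj A := by
      refine Finset.sum_congr rfl fun r hr => ?_
      have hr2 := Finset.mem_erase.1 hr
      have hr1 := Finset.mem_erase.1 hr2.2
      exact step_Ebl_untouched hU.elem hr1.1 hr2.1 hjji hjjj
    have hpair : Ebl c p.1 jj A₁ + Ebl c p.2 jj A₁ = Ebl c p.1 jj A + Ebl c p.2 jj A :=
      step_pair_sum hU.orth hU.elem hij hjji hjjj
    linarith

end AuxDev7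
section AuxDev8

open Finset

variable {n : ℕ} {c : ℕ → ℕ}

lemma step_pair_upper_left {U C : Matrix (Fin n) (Fin n) ℝ} {i j : ℕ}
    (hO : Orth U) (hE : IsElem c i j U) (hij : i ≠ j) {s : ℕ} (hsi : s ≠ i) (hsj : s ≠ j) :
    Ebl c i s (U.transpose * C * U) ≤ Ebl c i s C + Ebl c j s C := by
  have h := step_pair_sum (C := C) hO hE hij hsi hsj
  have h2 := Ebl_nonneg c j s (U.transpose * C * U)
  linarith

lemma step_pair_upper_right {U C : Matrix (Fin n) (Fin n) ℝ} {i j : ℕ}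
    (hO : Orth U) (hE : IsElem c i j U) (hij : i ≠ j) {s : ℕ} (hsi : s ≠ i) (hsj : s ≠ j) :
    Ebl c j s (U.transpose * C * U) ≤ Ebl c i s C + Ebl c j s C := by
  have h := step_pair_sum (C := C) hO hE hij hsi hsj
  have h2 := Ebl_nonneg c i s (U.transpose * C * U)
  linarith

lemma step_piv_zero {M : Matrix (Fin n) (Fin n) ℝ} {i j : ℕ}
    (hij : i ≠ j) (hPD : PivDiag c i j M) : Ebl c i j M = 0 := by
  unfold Ebl
  refine Finset.sum_eq_zero fun a ha => Finset.sum_eq_zero fun b hb => ?_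
  have hab : a ≠ b := fun e => by
    subst e; exact blk_disjoint c hij (mem_blkF.1 ha) (mem_blkF.1 hb)
  rw [hPD a b hab (Or.inl (mem_blkF.1 ha)) (Or.inr (mem_blkF.1 hb))]
  norm_num

lemma step_offPiv_budget {U C : Matrix (Fin n) (Fin n) ℝ} {i j : ℕ} {σ : ℝ}
    (hU : GoodStep n c σ i j U) (hC : C.IsSymm)
    (hPD : PivDiag c i j (U.transpose * C * U)) :
    OffPiv c i j C = 2 * (offSq C - offSq (U.transpose * C * U)) := by
  have := step_offSq hU.orth hU.elem hC hPD
  linarith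

/-- the backward σ-chase within one column -/
lemma col_chase {σ : ℝ} (hσ : 0 < σ) (hσ1 : σ ≤ 1) {j : ℕ} {P : ℝ} (hP : 0 ≤ P) :
    ∀ (rows : List ℕ) {C D : Matrix (Fin n) (Fin n) ℝ},
    rows.Nodup → (∀ r ∈ rows, r ≠ j) →
    JChain c σ (rows.map fun r => (r, j)) C D → C.IsSymm →
    (∀ r ∈ rows, ∀ s ∈ rows, r ≠ s → Ebl c r s C ≤ P) →
    ∀ r ∈ rows, (σ ^ 2 / 2) ^ rows.length * Ebl c r j C
        ≤ 2 * (offSq C - offSq D) + rows.length * P := by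
  have hβ0 : 0 < σ ^ 2 / 2 := by positivity
  have hβ1 : σ ^ 2 / 2 ≤ 1 := by nlinarith
  intro rows
  induction rows with
  | nil => intro C D _ _ _ _ _ r hr; exact absurd hr List.not_mem_nil
  | cons i rows' ih =>
    intro C D hnd hnj hchain hC hpairs r hr
    obtain ⟨U, hU, hPD, hrest⟩ := hchain
    set C₁ := U.transpose * C * U with hC₁
    have hC₁symm : C₁.IsSymm := conj_isSymm hC
    have hij : i ≠ j := hnj i (List.mem_cons_self)
    have hmonoCD : offSq D ≤ offSq C₁ := jchain_offSq_mono _ hrest hC₁symm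
    have hstep : offSq C₁ = offSq C - OffPiv c i j C / 2 :=
      step_offSq hU.orth hU.elem hC hPD
    have hOPnn := OffPiv_nonneg c i j C
    have hlen : (i :: rows').length = rows'.length + 1 := rfl
    rcases List.mem_cons.1 hr with rfl | hr'
    · -- r is the head pivot
      have h1 : Ebl c r j C ≤ OffPiv c r j C := Ebl_le_OffPiv hij C
      have h2 : (σ ^ 2 / 2) ^ (r :: rows').length * Ebl c r j C ≤ Ebl c r j C := by
        have hpow1 : (σ ^ 2 / 2) ^ (r :: rows').length ≤ 1 :=
          pow_le_one₀ (le_of_lt hβ0) hβ1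
        have := Ebl_nonneg c r j C
        nlinarith
      have hlenP : 0 ≤ ((r :: rows').length : ℝ) * P := by positivity
      linarith
    · -- r in the tail
      have hrne_i : r ≠ i := by
        intro e; subst e; exact (List.nodup_cons.1 hnd).1 hr'
      have hrne_j : r ≠ j := hnj r (List.mem_cons_of_mem i hr')
      -- invariant for the tail
      have hpairs' : ∀ a ∈ rows', ∀ b ∈ rows', a ≠ b → Ebl c a b C₁ ≤ P := by
        intro a ha b hb hab
        have hai : a ≠ i := fun e => by
          subst e; exact (List.nodup_cons.1 hnd).1 ha
        have hbi : b ≠ i := fun e => by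
          subst e; exact (List.nodup_cons.1 hnd).1 hb
        have haj : a ≠ j := hnj a (List.mem_cons_of_mem i ha)
        have hbj : b ≠ j := hnj b (List.mem_cons_of_mem i hb)
        rw [step_Ebl_untouched hU.elem hai haj hbi hbj]
        exact hpairs a (List.mem_cons_of_mem i ha) b (List.mem_cons_of_mem i hb) hab
      have hih := ih (List.nodup_cons.1 hnd).2 (fun a ha => hnj a (List.mem_cons_of_mem i ha))
        hrest hC₁symm hpairs' r hr'
      -- the σ step
      have hsig := step_sigma hU.orth hU.elem hij hσ hU.sigj hrne_i hrne_j C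
      have hflip1 : Ebl c j r C = Ebl c r j C := Ebl_symm hC j r
      have hflip2 : Ebl c j r C₁ = Ebl c r j C₁ := Ebl_symm hC₁symm j r
      have hpol : Ebl c i r C ≤ P :=
        hpairs i (List.mem_cons_self) r (List.mem_cons_of_mem i hr')
          (Ne.symm hrne_i)
      -- β * Ebl r j C ≤ Ebl r j C₁ + P
      have hkey : σ ^ 2 / 2 * Ebl c r j C ≤ Ebl c r j C₁ + P := by
        rw [← hflip1, ← hflip2]
        linarith
      have hpow : (0:ℝ) ≤ (σ ^ 2 / 2) ^ rows'.length := le_of_lt (pow_pos hβ0 _)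
      have hpow1 : (σ ^ 2 / 2) ^ rows'.length ≤ 1 := pow_le_one₀ (le_of_lt hβ0) hβ1
      have hmul : (σ ^ 2 / 2) ^ (rows'.length + 1) * Ebl c r j C
          ≤ (σ ^ 2 / 2) ^ rows'.length * Ebl c r j C₁
            + (σ ^ 2 / 2) ^ rows'.length * P := by
        have := mul_le_mul_of_nonneg_left hkey hpow
        calc (σ ^ 2 / 2) ^ (rows'.length + 1) * Ebl c r j C
            = (σ ^ 2 / 2) ^ rows'.length * (σ ^ 2 / 2 * Ebl c r j C) := by ring
          _ ≤ (σ ^ 2 / 2) ^ rows'.length * (Ebl c r j C₁ + P) := this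
          _ = (σ ^ 2 / 2) ^ rows'.length * Ebl c r j C₁
              + (σ ^ 2 / 2) ^ rows'.length * P := by ring
      have hPle : (σ ^ 2 / 2) ^ rows'.length * P ≤ P := by nlinarith
      rw [hlen]
      push_cast
      nlinarith [hmul, hih, hPle, hmonoCD, hstep, hOPnn]

/-- growth bound within one column -/
lemma col_growth {σ : ℝ} {j : ℕ} {S : Finset ℕ} (hjS : j ∉ S) :
    ∀ (rows : List ℕ) {C D : Matrix (Fin n) (Fin n) ℝ} {X : ℝ},
    (∀ r ∈ rows, r ∈ S) →
    JChain c σ (rows.map fun r => (r, j)) C D → C.IsSymm → 0 ≤ X →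
    (∀ r s : ℕ, (r ∈ S ∨ r = j) → (s ∈ S ∨ s = j) → r ≠ s → Ebl c r s C ≤ X) →
    ∀ r s : ℕ, (r ∈ S ∨ r = j) → (s ∈ S ∨ s = j) → r ≠ s →
      Ebl c r s D ≤ 2 ^ rows.length * X := by
  intro rows
  induction rows with
  | nil =>
    intro C D X _ hchain _ _ hpairs r s hrS hsS hrs
    rw [hchain]
    simpa using hpairs r s hrS hsS hrs
  | cons i rows' ih =>
    intro C D X hmem hchain hC hX hpairs r s hrS hsS hrs
    obtain ⟨U, hU, hPD, hrest⟩ := hchain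
    set C₁ := U.transpose * C * U with hC₁
    have hC₁symm : C₁.IsSymm := conj_isSymm hC
    have hiS : i ∈ S := hmem i (List.mem_cons_self)
    have hij : i ≠ j := fun e => hjS (e ▸ hiS)
    -- new invariant at C₁ with bound 2X
    have hnew : ∀ a b : ℕ, (a ∈ S ∨ a = j) → (b ∈ S ∨ b = j) → a ≠ b →
        Ebl c a b C₁ ≤ 2 * X := by
      have hrowi : ∀ b : ℕ, (b ∈ S ∨ b = j) → b ≠ i → b ≠ j → Ebl c i b C₁ ≤ 2 * X := by
        intro b hbS hbi hbj
        have h := step_pair_upper_left (C := C) hU.orth hU.elem hij hbi hbj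
        have h1 : Ebl c i b C ≤ X := hpairs i b (Or.inl hiS) hbS (Ne.symm hbi)
        have h2 : Ebl c j b C ≤ X := hpairs j b (Or.inr rfl) hbS (Ne.symm hbj)
        linarith
      have hrowj : ∀ b : ℕ, (b ∈ S ∨ b = j) → b ≠ i → b ≠ j → Ebl c j b C₁ ≤ 2 * X := by
        intro b hbS hbi hbj
        have h := step_pair_upper_right (C := C) hU.orth hU.elem hij hbi hbj
        have h1 : Ebl c i b C ≤ X := hpairs i b (Or.inl hiS) hbS (Ne.symm hbi)
        have h2 : Ebl c j b C ≤ X := hpairs j b (Or.inr rfl) hbS (Ne.symm hbj)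
        linarith
      intro a b haS hbS hab
      by_cases hai : a = i
      · subst hai
        by_cases hbj : b = j
        · subst hbj; rw [step_piv_zero hij hPD]; linarith
        · exact hrowi b hbS (Ne.symm hab) hbj
      · by_cases haj : a = j
        · subst haj
          by_cases hbi : b = i
          · subst hbi
            rw [Ebl_symm hC₁symm, step_piv_zero hij hPD]; linarith
          · exact hrowj b hbS hbi (Ne.symm hab)
        · by_cases hbi : b = i
          · subst hbi
            rw [Ebl_symm hC₁symm]
            exact hrowi a haS hai haj
          · by_cases hbj : b = j
            · subst hbj
              rw [Ebl_symm hC₁symm]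
              exact hrowj a haS hai haj
            · rw [step_Ebl_untouched hU.elem hai haj hbi hbj]
              have := hpairs a b haS hbS hab
              linarith
    have hcall := ih (fun a ha => hmem a (List.mem_cons_of_mem i ha)) hrest hC₁symm
      (by linarith) hnew r s hrS hsS hrs
    calc Ebl c r s D ≤ 2 ^ rows'.length * (2 * X) := hcall
      _ = 2 ^ (i :: rows').length * X := by
          rw [List.length_cons]; ring
end AuxDev8
section AuxDev9

open Finset

variable {n : ℕ} {c : ℕ → ℕ}

/-- entries of a block untouched by a chain avoiding it -/
lemma jchain_entry_untouched {σ : ℝ} {r : ℕ} :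
    ∀ (l : List (ℕ × ℕ)) {A A' : Matrix (Fin n) (Fin n) ℝ},
    JChain c σ l A A' → (∀ p ∈ l, p.1 ≠ r ∧ p.2 ≠ r) →
    ∀ a b : Fin n, inBlk c r (a : ℕ) → inBlk c r (b : ℕ) → A' a b = A a b := by
  intro l
  induction l with
  | nil => intro A A' h _ a b _ _; rw [h]
  | cons p l ih =>
    rintro A A' ⟨U, hU, hPD, hrest⟩ hp a b ha hb
    obtain ⟨h1, h2⟩ := hp p (List.mem_cons_self)
    rw [ih hrest (fun q hq => hp q (List.mem_cons_of_mem p hq)) a b ha hb]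
    exact step_ent hU.elem (notPiv_of_blk ha (Ne.symm h1) (Ne.symm h2))
      (notPiv_of_blk hb (Ne.symm h1) (Ne.symm h2))

lemma jchain_WithinOff_untouched {σ : ℝ} {r : ℕ}
    (l : List (ℕ × ℕ)) {A A' : Matrix (Fin n) (Fin n) ℝ}
    (h : JChain c σ l A A') (hp : ∀ p ∈ l, p.1 ≠ r ∧ p.2 ≠ r) :
    WithinOff c r A' = WithinOff c r A := by
  unfold WithinOff
  refine Finset.sum_congr rfl fun a ha => Finset.sum_congr rfl fun b hb => ?_
  rw [jchain_entry_untouched l h hp a b (mem_blkF.1 ha) (mem_blkF.1 hb)]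

/-- upper-triangular within-block mass -/
def WithinUpper (c : ℕ → ℕ) (r : ℕ) (M : Matrix (Fin n) (Fin n) ℝ) : ℝ :=
  ∑ a ∈ blkF n c r, ∑ b ∈ blkF n c r, if (a : ℕ) < (b : ℕ) then (M a b) ^ 2 else 0

lemma WithinUpper_le_WithinOff (r : ℕ) (M : Matrix (Fin n) (Fin n) ℝ) :
    WithinUpper c r M ≤ WithinOff c r M := by
  unfold WithinUpper WithinOff
  refine Finset.sum_le_sum fun a _ => Finset.sum_le_sum fun b _ => ?_
  by_cases h : (a : ℕ) < (b : ℕ)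
  · rw [if_pos h, if_neg (fun e => by subst e; omega)]
  · rw [if_neg h]
    by_cases h2 : a = b <;> simp [h2, sq_nonneg]

/-- the universe is the disjoint union of the blocks -/
lemma univ_eq_biUnion_blkF {m : ℕ} (hpart : IsPartition n m c) :
    (Finset.univ : Finset (Fin n)) = (Finset.range m).biUnion (fun r => blkF n c r) := by
  ext t
  simp only [Finset.mem_univ, true_iff, Finset.mem_biUnion, Finset.mem_range]
  have ht : (t : ℕ) < off c m := by
    have : off c m = n := hpart.2.2
    rw [this]; exact t.2
  obtain ⟨r, hr, hb⟩ := exists_blk c ht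
  exact ⟨r, hr, mem_blkF.2 hb⟩

lemma blkF_pairwise_disj {m : ℕ} :
    ∀ r ∈ Finset.range m, ∀ s ∈ Finset.range m, r ≠ s →
      Disjoint (blkF n c r) (blkF n c s) := fun r _ s _ hrs => blkF_disj hrs

/-- block partition of a double sum -/
lemma double_sum_blocks {m : ℕ} (hpart : IsPartition n m c)
    (f : Fin n → Fin n → ℝ) :
    ∑ a : Fin n, ∑ b : Fin n, f a b
      = ∑ r ∈ Finset.range m, ∑ s ∈ Finset.range m,
          ∑ a ∈ blkF n c r, ∑ b ∈ blkF n c s, f a b := by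
  have hu := univ_eq_biUnion_blkF hpart
  calc ∑ a : Fin n, ∑ b : Fin n, f a b
      = ∑ r ∈ Finset.range m, ∑ a ∈ blkF n c r, ∑ b : Fin n, f a b := by
        rw [show (∑ a : Fin n, ∑ b : Fin n, f a b)
            = ∑ a ∈ (Finset.range m).biUnion (fun r => blkF n c r), ∑ b : Fin n, f a b by
          rw [← hu]]
        exact Finset.sum_biUnion blkF_pairwise_disj
    _ = ∑ r ∈ Finset.range m, ∑ s ∈ Finset.range m,
          ∑ a ∈ blkF n c r, ∑ b ∈ blkF n c s, f a b := by
        refine Finset.sum_congr rfl fun r _ => ?_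
        rw [Finset.sum_comm]
        calc ∑ b : Fin n, ∑ a ∈ blkF n c r, f a b
            = ∑ s ∈ Finset.range m, ∑ b ∈ blkF n c s, ∑ a ∈ blkF n c r, f a b := by
              rw [show (∑ b : Fin n, ∑ a ∈ blkF n c r, f a b)
                  = ∑ b ∈ (Finset.range m).biUnion (fun s => blkF n c s),
                      ∑ a ∈ blkF n c r, f a b by rw [← hu]]
              exact Finset.sum_biUnion blkF_pairwise_disj
          _ = ∑ s ∈ Finset.range m, ∑ a ∈ blkF n c r, ∑ b ∈ blkF n c s, f a b :=
              Finset.sum_congr rfl fun s _ => Finset.sum_comm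

/-- indices in a lower block are smaller -/
lemma blk_lt_of_lt {r s : ℕ} {a b : Fin n} (hrs : r < s)
    (ha : inBlk c r (a : ℕ)) (hb : inBlk c s (b : ℕ)) : (a : ℕ) < (b : ℕ) := by
  have h1 : off c r + c r ≤ off c s := by
    rw [← off_succ]; exact off_mono c hrs
  have h2 := ha.2
  have h3 := hb.1
  omega

/-- decomposition of offSq into block contributions -/
lemma offSq_decomp {m : ℕ} (hpart : IsPartition n m c) (A : Matrix (Fin n) (Fin n) ℝ) :
    offSq A = (∑ j ∈ Finset.range m, ∑ r ∈ Finset.range j, Ebl c r j A)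
      + ∑ r ∈ Finset.range m, WithinUpper c r A := by
  unfold offSq
  rw [double_sum_blocks hpart (fun a b => if (a : ℕ) < (b : ℕ) then (A a b) ^ 2 else 0)]
  have key : ∀ r ∈ Finset.range m, ∀ s ∈ Finset.range m,
      (∑ a ∈ blkF n c r, ∑ b ∈ blkF n c s, if (a : ℕ) < (b : ℕ) then (A a b) ^ 2 else 0)
        = (if r < s then Ebl c r s A else 0)
          + (if r = s then WithinUpper c r A else 0) := by
    intro r _ s _
    rcases lt_trichotomy r s with h | h | h
    · rw [if_pos h, if_neg (by omega)]
      rw [add_zero]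
      unfold Ebl
      refine Finset.sum_congr rfl fun a ha => Finset.sum_congr rfl fun b hb => ?_
      rw [if_pos (blk_lt_of_lt h (mem_blkF.1 ha) (mem_blkF.1 hb))]
    · subst h
      rw [if_neg (lt_irrefl r), if_pos rfl, zero_add]
      rfl
    · rw [if_neg (by omega), if_neg (by omega), add_zero]
      refine Finset.sum_eq_zero fun a ha => Finset.sum_eq_zero fun b hb => ?_
      rw [if_neg (by
        have := blk_lt_of_lt h (mem_blkF.1 hb) (mem_blkF.1 ha)
        omega)]
  rw [Finset.sum_congr rfl fun r hr => Finset.sum_congr rfl fun s hs => key r hr s hs]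
  rw [Finset.sum_comm]
  have split : ∀ s ∈ Finset.range m,
      (∑ r ∈ Finset.range m, ((if r < s then Ebl c r s A else 0)
          + (if r = s then WithinUpper c r A else 0)))
        = (∑ r ∈ Finset.range s, Ebl c r s A) + WithinUpper c s A := by
    intro s hs
    rw [Finset.sum_add_distrib]
    congr 1
    · rw [← Finset.sum_filter]
      rw [show Finset.filter (fun r => r < s) (Finset.range m) = Finset.range s by
          ext r
          simp only [Finset.mem_filter, Finset.mem_range]
          constructor
          · rintro ⟨_, h2⟩; exact h2
          · intro h; exact ⟨lt_trans h (Finset.mem_range.1 hs), h⟩]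
    · rw [Finset.sum_ite_eq' (Finset.range m) s (fun r => WithinUpper c r A), if_pos hs]
  rw [Finset.sum_congr rfl split, Finset.sum_add_distrib]

end AuxDev9
section AuxDev10

open Finset

variable {n : ℕ} {c : ℕ → ℕ}

/-- the list of pivot rows in column `j` -/
def rowsL (τ : ℕ → ℕ → ℕ) (j : ℕ) : List ℕ := (List.range j).map (τ j)

/-- the pivot list of column `j` -/
def Fcol (τ : ℕ → ℕ → ℕ) (j : ℕ) : List (ℕ × ℕ) :=
  (List.range j).map fun a => (τ j a, j)

lemma Fcol_eq (τ : ℕ → ℕ → ℕ) (j : ℕ) :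
    Fcol τ j = (rowsL τ j).map fun r => (r, j) := by
  unfold Fcol rowsL
  rw [List.map_map]
  rfl

variable {τ : ℕ → ℕ → ℕ}

lemma rows_lt (hτ : ∀ j, Set.BijOn (τ j) (Set.Iio j) (Set.Iio j))
    {j : ℕ} : ∀ r ∈ rowsL τ j, r < j := by
  intro r hr
  rw [rowsL, List.mem_map] at hr
  obtain ⟨a, ha, rfl⟩ := hr
  exact (hτ j).mapsTo (Set.mem_Iio.2 (List.mem_range.1 ha))

lemma rows_nodup (hτ : ∀ j, Set.BijOn (τ j) (Set.Iio j) (Set.Iio j)) {j : ℕ} : (rowsL τ j).Nodup := by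
  refine List.Nodup.map_on ?_ List.nodup_range
  intro a ha b hb h
  exact (hτ j).injOn (Set.mem_Iio.2 (List.mem_range.1 ha))
    (Set.mem_Iio.2 (List.mem_range.1 hb)) h

lemma rows_complete (hτ : ∀ j, Set.BijOn (τ j) (Set.Iio j) (Set.Iio j)) {j r : ℕ} (h : r < j) : r ∈ rowsL τ j := by
  obtain ⟨a, ha, rfl⟩ := (hτ j).surjOn (Set.mem_Iio.2 h)
  exact List.mem_map.2 ⟨a, List.mem_range.2 (Set.mem_Iio.1 ha), rfl⟩

lemma rows_length {j : ℕ} : (rowsL τ j).length = j := by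
  rw [rowsL, List.length_map, List.length_range]

lemma Fcol_mem (hτ : ∀ j, Set.BijOn (τ j) (Set.Iio j) (Set.Iio j)) {j : ℕ} : ∀ p ∈ Fcol τ j, p.1 < j ∧ p.2 = j := by
  intro p hp
  rw [Fcol, List.mem_map] at hp
  obtain ⟨a, ha, rfl⟩ := hp
  exact ⟨(hτ j).mapsTo (Set.mem_Iio.2 (List.mem_range.1 ha)), rfl⟩

/-- pivot pairs of the first `k` columns stay below `k + 1` -/
lemma flat_mem (hτ : ∀ j, Set.BijOn (τ j) (Set.Iio j) (Set.Iio j)) {k : ℕ} : ∀ p ∈ (List.range' 1 k).flatMap (Fcol τ),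
    p.1 < p.2 ∧ p.2 ≤ k := by
  intro p hp
  rw [List.mem_flatMap] at hp
  obtain ⟨j, hj, hpj⟩ := hp
  rw [List.mem_range'_1] at hj
  obtain ⟨h1, h2⟩ := Fcol_mem hτ p hpj
  exact ⟨h2 ▸ h1, h2 ▸ (by omega)⟩


/-- one full column: harvest the σ-chase and the growth bound -/
lemma col_step (hτ : ∀ j, Set.BijOn (τ j) (Set.Iio j) (Set.Iio j))
    {σ : ℝ} (hσ0 : 0 < σ) (hσ1 : σ ≤ 1) {j : ℕ} (hj1 : 1 ≤ j) (hjn : j ≤ n)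
    {P D : ℝ} (hP0 : 0 ≤ P) (hD0 : 0 ≤ D)
    {M M' : Matrix (Fin n) (Fin n) ℝ} (hMsymm : M.IsSymm)
    (hcol : JChain c σ (Fcol τ j) M M')
    (hdrop : offSq M - offSq M' ≤ D)
    (hpairs : ∀ a b : ℕ, a < j → b < j → a ≠ b → Ebl c a b M ≤ P) :
    (∀ r, r < j → Ebl c r j M ≤ (2 * D + n * P) / (σ ^ 2 / 2) ^ n) ∧
    (∀ a b : ℕ, a < j + 1 → b < j + 1 → a ≠ b →
      Ebl c a b M' ≤ 2 ^ n * (P + (2 * D + n * P) / (σ ^ 2 / 2) ^ n)) := by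
  have hβ0 : 0 < σ ^ 2 / 2 := by positivity
  have hβ1 : σ ^ 2 / 2 ≤ 1 := by nlinarith
  have hβn0 : 0 < (σ ^ 2 / 2) ^ n := pow_pos hβ0 n
  have hcol' : JChain c σ ((rowsL τ j).map fun r => (r, j)) M M' := by
    rwa [Fcol_eq] at hcol
  have hpairs' : ∀ a ∈ rowsL τ j, ∀ b ∈ rowsL τ j, a ≠ b → Ebl c a b M ≤ P :=
    fun a ha b hb hab => hpairs a b (rows_lt hτ a ha) (rows_lt hτ b hb) hab
  have hq : ∀ r, r < j → Ebl c r j M ≤ (2 * D + n * P) / (σ ^ 2 / 2) ^ n := by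
    intro r hr
    have hchase := col_chase (c := c) hσ0 hσ1 hP0 (rowsL τ j) (rows_nodup hτ)
      (fun a ha => Nat.ne_of_lt (rows_lt hτ a ha)) hcol' hMsymm hpairs'
      r (rows_complete hτ hr)
    rw [rows_length] at hchase
    have hE0 : 0 ≤ Ebl c r j M := Ebl_nonneg c r j M
    have hpow : (σ ^ 2 / 2) ^ n ≤ (σ ^ 2 / 2) ^ j :=
      pow_le_pow_of_le_one (le_of_lt hβ0) hβ1 hjn
    have hjP : (j : ℝ) * P ≤ (n : ℝ) * P := by
      have : (j : ℝ) ≤ (n : ℝ) := by exact_mod_cast hjn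
      nlinarith
    rw [le_div_iff₀ hβn0]
    calc Ebl c r j M * (σ ^ 2 / 2) ^ n = (σ ^ 2 / 2) ^ n * Ebl c r j M := by ring
      _ ≤ (σ ^ 2 / 2) ^ j * Ebl c r j M := mul_le_mul_of_nonneg_right hpow hE0
      _ ≤ 2 * (offSq M - offSq M') + (j : ℝ) * P := hchase
      _ ≤ 2 * D + (n : ℝ) * P := by linarith
  refine ⟨hq, ?_⟩
  have hq0 : 0 ≤ (2 * D + n * P) / (σ ^ 2 / 2) ^ n := by positivity
  have hX0 : 0 ≤ P + (2 * D + n * P) / (σ ^ 2 / 2) ^ n := by linarith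
  have hstart : ∀ r s : ℕ, (r ∈ Finset.range j ∨ r = j) → (s ∈ Finset.range j ∨ s = j) →
      r ≠ s → Ebl c r s M ≤ P + (2 * D + n * P) / (σ ^ 2 / 2) ^ n := by
    intro r s hrS hsS hrs
    rcases hrS with hr | rfl
    · rcases hsS with hs | rfl
      · have := hpairs r s (Finset.mem_range.1 hr) (Finset.mem_range.1 hs) hrs
        linarith
      · have := hq r (Finset.mem_range.1 hr)
        linarith
    · rcases hsS with hs | rfl
      · have h1 : Ebl c r s M = Ebl c s r M := Ebl_symm hMsymm r s
        have := hq s (Finset.mem_range.1 hs)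
        rw [h1]; linarith
      · exact absurd rfl hrs
  have hgrow := col_growth (c := c) (S := Finset.range j) (by simp) (rowsL τ j)
    (fun r hr => Finset.mem_range.2 (rows_lt hτ r hr)) hcol' hMsymm hX0 hstart
  intro a b ha hb hab
  have haS : a ∈ Finset.range j ∨ a = j := by
    rcases Nat.lt_or_ge a j with h | h
    · exact Or.inl (Finset.mem_range.2 h)
    · exact Or.inr (by omega)
  have hbS : b ∈ Finset.range j ∨ b = j := by
    rcases Nat.lt_or_ge b j with h | h
    · exact Or.inl (Finset.mem_range.2 h)
    · exact Or.inr (by omega)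
  have hfin := hgrow a b haS hbS hab
  rw [rows_length] at hfin
  have h2j : (2:ℝ) ^ j ≤ 2 ^ n := pow_le_pow_right₀ (by norm_num) hjn
  calc Ebl c a b M' ≤ 2 ^ j * (P + (2 * D + n * P) / (σ ^ 2 / 2) ^ n) := hfin
    _ ≤ 2 ^ n * (P + (2 * D + n * P) / (σ ^ 2 / 2) ^ n) := by nlinarith


/-- the recursion arithmetic -/
lemma rec_arith {β D : ℝ} (n k : ℕ) (hn1 : 1 ≤ n) (hβ0 : 0 < β) (hβ1 : β ≤ 1) (hD : 0 ≤ D) :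
    2 ^ n * ((2 ^ (n + 1) * ((n : ℝ) + 1) / β ^ n + 1) ^ (k + 1) * D
        + (2 * D + n * ((2 ^ (n + 1) * ((n : ℝ) + 1) / β ^ n + 1) ^ (k + 1) * D)) / β ^ n)
      ≤ (2 ^ (n + 1) * ((n : ℝ) + 1) / β ^ n + 1) ^ (k + 2) * D := by
  have hE0 : 0 < β ^ n := pow_pos hβ0 n
  have hE1 : β ^ n ≤ 1 := pow_le_one₀ (le_of_lt hβ0) hβ1
  set E : ℝ := β ^ n with hE
  set K : ℝ := 2 ^ (n + 1) * ((n : ℝ) + 1) / E with hK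
  have hK0 : 0 ≤ K := by positivity
  set Q : ℝ := (K + 1) ^ (k + 1) with hQ
  have hQ1 : (1:ℝ) ≤ Q := one_le_pow₀ (by linarith)
  have hQ0 : (0:ℝ) ≤ Q := by linarith
  have hn0 : (1:ℝ) ≤ (n : ℝ) := by exact_mod_cast hn1
  have h2n0 : (0:ℝ) < 2 ^ n := by positivity
  have hrw : 2 * D + (n : ℝ) * (Q * D) = (2 + n * Q) * D := by ring
  rw [hrw]
  have hdiv : ((2 + (n : ℝ) * Q) * D) / E = ((2 + (n : ℝ) * Q) / E) * D := by
    rw [div_mul_eq_mul_div]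
  rw [hdiv]
  have hfold : 2 ^ n * (Q * D + (2 + (n : ℝ) * Q) / E * D)
      = (2 ^ n * (Q + (2 + (n : ℝ) * Q) / E)) * D := by ring
  rw [hfold]
  have hpow2 : (K + 1) ^ (k + 2) = (K + 1) * Q := by rw [hQ]; ring
  rw [hpow2]
  refine mul_le_mul_of_nonneg_right ?_ hD
  -- scalar inequality
  have hgoal : 2 ^ n * (Q + (2 + (n : ℝ) * Q) / E)
      = (2 ^ n * (Q * E + (2 + (n : ℝ) * Q))) / E := by
    field_simp
  have hrhs : (K + 1) * Q = (2 ^ (n + 1) * ((n : ℝ) + 1) * Q + Q * E) / E := by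
    rw [hK]
    field_simp
  rw [hgoal, hrhs, div_le_div_iff₀ hE0 hE0]
  have key : 2 ^ n * (Q * E + (2 + (n : ℝ) * Q)) ≤ 2 ^ (n + 1) * ((n : ℝ) + 1) * Q + Q * E := by
    have h2n1 : (2:ℝ) ^ (n + 1) = 2 * 2 ^ n := by ring
    rw [h2n1]
    nlinarith [mul_nonneg (mul_nonneg (le_of_lt h2n0) hQ0) (by linarith : (0:ℝ) ≤ 1 - E),
      mul_nonneg (le_of_lt h2n0) (by linarith : (0:ℝ) ≤ Q - 1),
      mul_nonneg (mul_nonneg (by linarith : (0:ℝ) ≤ (n:ℝ) - 1) (le_of_lt h2n0)) hQ0,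
      mul_nonneg hQ0 (le_of_lt hE0)]
  nlinarith [key, hE0, mul_le_mul_of_nonneg_right key (le_of_lt hE0)]

set_option maxHeartbeats 800000 in
/-- The main inter-column induction. -/
lemma main_ind (hτ : ∀ j, Set.BijOn (τ j) (Set.Iio j) (Set.Iio j))
    {σ : ℝ} (hσ0 : 0 < σ) (hσ1 : σ ≤ 1) {m : ℕ}
    (hm2 : 2 ≤ m) (hmn : m ≤ n)
    {A A' : Matrix (Fin n) (Fin n) ℝ} (hA : A.IsSymm)
    (hch : JChain c σ ((List.range' 1 (m - 1)).flatMap (Fcol τ)) A A') :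
    ∀ k, k ≤ m - 1 →
      ∃ M : Matrix (Fin n) (Fin n) ℝ,
        JChain c σ ((List.range' 1 k).flatMap (Fcol τ)) A M ∧
        JChain c σ ((List.range' (1 + k) (m - 1 - k)).flatMap (Fcol τ)) M A' ∧
        M.IsSymm ∧
        (∀ a b : ℕ, a < k + 1 → b < k + 1 → a ≠ b →
          Ebl c a b M
            ≤ (2 ^ (n + 1) * ((n : ℝ) + 1) / (σ ^ 2 / 2) ^ n + 1) ^ (k + 1)
                * (offSq A - offSq A')) := by
  have hn1 : 1 ≤ n := by omega
  have hβ0 : 0 < σ ^ 2 / 2 := by positivity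
  have hβ1 : σ ^ 2 / 2 ≤ 1 := by nlinarith
  have hD0 : 0 ≤ offSq A - offSq A' := by
    have := jchain_offSq_mono _ hch hA
    linarith
  have hκ0 : (0:ℝ) ≤ 2 ^ (n + 1) * ((n : ℝ) + 1) / (σ ^ 2 / 2) ^ n := by positivity
  intro k
  induction k with
  | zero =>
    intro _
    refine ⟨A, by simp [JChain], by simpa using hch, hA, ?_⟩
    intro a b ha hb hab
    omega
  | succ k ih =>
    intro hk1
    obtain ⟨M, hpre, hsuf, hMsymm, hpairs⟩ := ih (by omega)
    have hsplit : List.range' (1 + k) (m - 1 - k)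
        = (k + 1) :: List.range' (1 + (k + 1)) (m - 1 - (k + 1)) := by
      have h1 : m - 1 - k = (m - 1 - (k + 1)) + 1 := by omega
      rw [h1, List.range'_succ]
      congr 1
      omega
    rw [hsplit, List.flatMap_cons] at hsuf
    obtain ⟨M', hcol, hrest⟩ := (jchain_append _ _ _ _).1 hsuf
    have hM'symm : M'.IsSymm := jchain_symm _ hcol hMsymm
    have hdrop : offSq M - offSq M' ≤ offSq A - offSq A' := by
      have h1 : offSq M ≤ offSq A := jchain_offSq_mono _ hpre hA
      have h2 : offSq A' ≤ offSq M' := jchain_offSq_mono _ hrest hM'symm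
      linarith
    have hP0 : (0:ℝ) ≤ (2 ^ (n + 1) * ((n : ℝ) + 1) / (σ ^ 2 / 2) ^ n + 1) ^ (k + 1)
        * (offSq A - offSq A') := by
      have : (0:ℝ) ≤ (2 ^ (n + 1) * ((n : ℝ) + 1) / (σ ^ 2 / 2) ^ n + 1) ^ (k + 1) := by
        positivity
      exact mul_nonneg this hD0
    have hstep := col_step (c := c) hτ hσ0 hσ1 (by omega : 1 ≤ k + 1)
      (by omega : k + 1 ≤ n) hP0 hD0 hMsymm hcol hdrop hpairs
    refine ⟨M', ?_, ?_, hM'symm, ?_⟩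
    · have hconcat : List.range' 1 (k + 1) = List.range' 1 k ++ [1 + k] := by
        rw [List.range'_concat]
        congr 1
        · simp
      rw [hconcat, List.flatMap_append]
      refine (jchain_append _ _ _ _).2 ⟨M, hpre, ?_⟩
      rw [show 1 + k = k + 1 by omega]
      simpa using hcol
    · exact hrest
    · intro a b ha hb hab
      have hfin := hstep.2 a b ha hb hab
      calc Ebl c a b M'
          ≤ 2 ^ n * ((2 ^ (n + 1) * ((n : ℝ) + 1) / (σ ^ 2 / 2) ^ n + 1) ^ (k + 1)
              * (offSq A - offSq A')
            + (2 * (offSq A - offSq A')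
              + n * ((2 ^ (n + 1) * ((n : ℝ) + 1) / (σ ^ 2 / 2) ^ n + 1) ^ (k + 1)
                * (offSq A - offSq A'))) / (σ ^ 2 / 2) ^ n) := hfin
        _ ≤ (2 ^ (n + 1) * ((n : ℝ) + 1) / (σ ^ 2 / 2) ^ n + 1) ^ (k + 2)
              * (offSq A - offSq A') := rec_arith n k hn1 hβ0 hβ1 hD0
        _ = (2 ^ (n + 1) * ((n : ℝ) + 1) / (σ ^ 2 / 2) ^ n + 1) ^ (k + 1 + 1)
              * (offSq A - offSq A') := by norm_num

end AuxDev10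
section AuxDev11

open Finset

variable {n : ℕ} {c : ℕ → ℕ}

lemma sweep2_to_jchain {σ ρ : ℝ} :
    ∀ (L : List (ℕ × ℕ)) (A A' : Matrix (Fin n) (Fin n) ℝ),
    (∀ p ∈ L, ∀ U : Matrix (Fin n) (Fin n) ℝ,
      IsUBC2 c c ρ p.1 p.2 U → GoodStep n c σ p.1 p.2 U) →
    Sweep2 c c ρ L A A' → JChain c σ L A A' := by
  intro L
  induction L with
  | nil =>
    rintro A A' _ ⟨B, h0, hT, _⟩
    show A' = A
    rw [← h0, ← hT]
    rfl
  | cons p l ih =>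
    rintro A A' hconv ⟨B, h0, hT, hstep⟩
    obtain ⟨U, hU, hB1, hPD⟩ := hstep 0 (by simp)
    have hB1' : B 1 = U.transpose * A * U := by rw [show B 1 = U.transpose * B 0 * U from hB1, h0]
    refine ⟨U, hconv p (List.mem_cons_self) U hU, by rwa [← hB1'], ?_⟩
    rw [← hB1']
    refine ih (B 1) A' (fun q hq => hconv q (List.mem_cons_of_mem p hq)) ?_
    refine ⟨fun k => B (k + 1), rfl, ?_, ?_⟩
    · rw [← hT]
      rfl
    · intro k hk
      have hk' : k + 1 < (p :: l).length := by
        simp only [List.length_cons]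
        omega
      obtain ⟨U', h1, h2, h3⟩ := hstep (k + 1) hk'
      exact ⟨U', h1, h2, h3⟩

end AuxDev11
section AuxDev12

open Finset

variable {n : ℕ} {c : ℕ → ℕ}

lemma div_le_div_num {a b e : ℝ} (he : 0 < e) (h : a ≤ b) : a / e ≤ b / e := by
  rw [div_eq_mul_one_div a e, div_eq_mul_one_div b e]
  have : (0:ℝ) ≤ 1 / e := by positivity
  exact mul_le_mul_of_nonneg_right h this

set_option maxHeartbeats 1000000 in
lemma global_bound {τ : ℕ → ℕ → ℕ} (hτ : ∀ j, Set.BijOn (τ j) (Set.Iio j) (Set.Iio j))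
    {σ : ℝ} (hσ0 : 0 < σ) (hσ1 : σ ≤ 1) {m : ℕ}
    (hm2 : 2 ≤ m) (hmn : m ≤ n) (hpart : IsPartition n m c)
    {A A' : Matrix (Fin n) (Fin n) ℝ} (hA : A.IsSymm)
    (hch : JChain c σ ((List.range' 1 (m - 1)).flatMap (Fcol τ)) A A') :
    offSq A ≤ ((n : ℝ) ^ 2
        * ((2 + (n : ℝ) * (2 ^ (n + 1) * ((n : ℝ) + 1) / (σ ^ 2 / 2) ^ n + 1) ^ n)
            / (σ ^ 2 / 2) ^ n)
        + 2 * (n : ℝ)) * (offSq A - offSq A') := by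
  have hn1 : 1 ≤ n := by omega
  have hβ0 : 0 < σ ^ 2 / 2 := by positivity
  have hβ1 : σ ^ 2 / 2 ≤ 1 := by nlinarith
  have hβn0 : 0 < (σ ^ 2 / 2) ^ n := pow_pos hβ0 n
  set κ : ℝ := 2 ^ (n + 1) * ((n : ℝ) + 1) / (σ ^ 2 / 2) ^ n with hκ
  have hκ0 : (0:ℝ) ≤ κ := by rw [hκ]; positivity
  set D : ℝ := offSq A - offSq A' with hD
  have hD0 : 0 ≤ D := by
    rw [hD]
    have := jchain_offSq_mono _ hch hA
    linarith
  set qmax : ℝ := (2 * D + (n : ℝ) * ((κ + 1) ^ n * D)) / (σ ^ 2 / 2) ^ n with hqm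
  have hqmax0 : 0 ≤ qmax := by
    rw [hqm]
    have h1 : (0:ℝ) ≤ (κ + 1) ^ n := by positivity
    have h2 : (0:ℝ) ≤ 2 * D + (n : ℝ) * ((κ + 1) ^ n * D) := by
      have h3 := Nat.cast_nonneg (α := ℝ) n
      have h4 := mul_nonneg h3 (mul_nonneg h1 hD0)
      linarith
    positivity
  -- per-column bound
  have hcolsum : ∀ j ∈ Finset.range m, (∑ r ∈ Finset.range j, Ebl c r j A)
      ≤ (n : ℝ) * qmax := by
    intro j hjm
    rcases Nat.eq_zero_or_pos j with rfl | hj1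
    · simp
      positivity
    have hjm' : j ≤ m - 1 := by
      have := Finset.mem_range.1 hjm
      omega
    have hjn : j ≤ n := by omega
    obtain ⟨M, hpre, hsuf, hMsymm, hpairs⟩ :=
      main_ind hτ hσ0 hσ1 hm2 hmn hA hch (j - 1) (by omega)
    rw [show 1 + (j - 1) = j by omega, show m - 1 - (j - 1) = m - j by omega] at hsuf
    rw [show m - j = (m - j - 1) + 1 by omega, List.range'_succ, List.flatMap_cons] at hsuf
    obtain ⟨M', hcol, hrest⟩ := (jchain_append _ _ _ _).1 hsuf
    have hM'symm : M'.IsSymm := jchain_symm _ hcol hMsymm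
    have hdrop : offSq M - offSq M' ≤ D := by
      have h1 : offSq M ≤ offSq A := jchain_offSq_mono _ hpre hA
      have h2 : offSq A' ≤ offSq M' := jchain_offSq_mono _ hrest hM'symm
      rw [hD]; linarith
    have hpairs' : ∀ a b : ℕ, a < j → b < j → a ≠ b →
        Ebl c a b M ≤ (κ + 1) ^ j * D := by
      intro a b ha hb hab
      have h := hpairs a b (by omega) (by omega) hab
      rwa [show j - 1 + 1 = j by omega] at h
    have hP0 : (0:ℝ) ≤ (κ + 1) ^ j * D := by
      have h0 : (0:ℝ) ≤ (κ + 1) ^ j := by positivity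
      exact mul_nonneg h0 hD0
    have hstep := col_step (c := c) hτ hσ0 hσ1 hj1 hjn hP0 hD0 hMsymm hcol hdrop hpairs'
    -- conservation over columns before j
    have hcons := jchain_conserve (c := c) (T := Finset.range j) (jj := j) _ hpre hA
      (fun p hp => by
        have h := flat_mem hτ p hp
        exact ⟨Finset.mem_range.2 (by omega), Finset.mem_range.2 (by omega), by omega⟩)
      (by simp)
    rw [← hcons]
    -- per-row bound
    have hqr : ∀ r ∈ Finset.range j, Ebl c r j M ≤ qmax := by
      intro r hr
      have h1 := hstep.1 r (Finset.mem_range.1 hr)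
      have h2 : (2 * D + (n : ℝ) * ((κ + 1) ^ j * D)) / (σ ^ 2 / 2) ^ n ≤ qmax := by
        rw [hqm]
        refine div_le_div_num hβn0 ?_
        have hpow : (κ + 1) ^ j ≤ (κ + 1) ^ n :=
          pow_le_pow_right₀ (by linarith) hjn
        have h3 : (κ + 1) ^ j * D ≤ (κ + 1) ^ n * D := mul_le_mul_of_nonneg_right hpow hD0
        have h4 : (n : ℝ) * ((κ + 1) ^ j * D) ≤ (n : ℝ) * ((κ + 1) ^ n * D) :=
          mul_le_mul_of_nonneg_left h3 (Nat.cast_nonneg n)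
        linarith
      linarith
    calc ∑ r ∈ Finset.range j, Ebl c r j M ≤ ∑ _r ∈ Finset.range j, qmax :=
          Finset.sum_le_sum hqr
      _ = (j : ℝ) * qmax := by
          rw [Finset.sum_const, Finset.card_range, nsmul_eq_mul]
      _ ≤ (n : ℝ) * qmax := by
          have : (j : ℝ) ≤ (n : ℝ) := by exact_mod_cast hjn
          nlinarith
  -- within-block bound
  have hwithin : ∀ r ∈ Finset.range m, WithinUpper c r A ≤ 2 * D := by
    intro r hrm
    have hrm' : r < m := Finset.mem_range.1 hrm
    have key : ∀ jr : ℕ, 1 ≤ jr → jr ≤ m - 1 → (r = τ jr 0 ∨ r = jr) →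
        (∀ p ∈ (List.range' 1 (jr - 1)).flatMap (Fcol τ), p.1 ≠ r ∧ p.2 ≠ r) →
        WithinUpper c r A ≤ 2 * D := by
      intro jr hjr1 hjrm hpiv huntouch
      obtain ⟨M, hpre, hsuf, hMsymm, _⟩ :=
        main_ind hτ hσ0 hσ1 hm2 hmn hA hch (jr - 1) (by omega)
      rw [show 1 + (jr - 1) = jr by omega, show m - 1 - (jr - 1) = m - jr by omega] at hsuf
      rw [show m - jr = (m - jr - 1) + 1 by omega, List.range'_succ, List.flatMap_cons] at hsuf
      obtain ⟨M', hcol, hrest⟩ := (jchain_append _ _ _ _).1 hsuf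
      have hrange : List.range jr = 0 :: (List.range (jr - 1)).map Nat.succ := by
        conv_lhs => rw [show jr = (jr - 1) + 1 by omega]
        exact List.range_succ_eq_map
      have hFcol : Fcol τ jr
          = (τ jr 0, jr) :: ((List.range (jr - 1)).map Nat.succ).map
              (fun a => (τ jr a, jr)) := by
        rw [Fcol, hrange, List.map_cons]
      rw [hFcol] at hcol
      obtain ⟨U, hU, hPD, htail⟩ := hcol
      have hWO : WithinOff c r A = WithinOff c r M :=
        (jchain_WithinOff_untouched _ hpre huntouch).symm
      have h1 : WithinOff c r M ≤ OffPiv c (τ jr 0) jr M := WithinOff_le_OffPiv hpiv M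
      have h2 : OffPiv c (τ jr 0) jr M
          = 2 * (offSq M - offSq (U.transpose * M * U)) :=
        step_offPiv_budget hU hMsymm hPD
      have hM1symm : (U.transpose * M * U).IsSymm := conj_isSymm hMsymm
      have hM'symm : M'.IsSymm := jchain_symm _ htail hM1symm
      have h3 : offSq M' ≤ offSq (U.transpose * M * U) :=
        jchain_offSq_mono _ htail hM1symm
      have h4 : offSq A' ≤ offSq M' := jchain_offSq_mono _ hrest hM'symm
      have h5 : offSq M ≤ offSq A := jchain_offSq_mono _ hpre hA
      have h6 : WithinUpper c r A ≤ WithinOff c r A := WithinUpper_le_WithinOff r A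
      rw [hD]
      linarith [hWO, h1, h2, h3, h4, h5, h6]
    by_cases hr0 : r = 0
    · subst hr0
      refine key 1 (le_refl 1) (by omega) (Or.inl ?_) ?_
      · have := (hτ 1).mapsTo (Set.mem_Iio.2 (by omega : (0:ℕ) < 1))
        have h01 : τ 1 0 < 1 := this
        omega
      · intro p hp
        have h := flat_mem hτ p hp
        omega
    · refine key r (by omega) (by omega) (Or.inr rfl) ?_
      intro p hp
      have h := flat_mem hτ p hp
      omega
  -- combine
  rw [offSq_decomp hpart A]
  have h1 : ∑ j ∈ Finset.range m, ∑ r ∈ Finset.range j, Ebl c r j A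
      ≤ ∑ _j ∈ Finset.range m, (n : ℝ) * qmax := Finset.sum_le_sum hcolsum
  have h2 : ∑ r ∈ Finset.range m, WithinUpper c r A
      ≤ ∑ _r ∈ Finset.range m, 2 * D := Finset.sum_le_sum hwithin
  rw [Finset.sum_const, Finset.card_range, nsmul_eq_mul] at h1 h2
  have hmn' : (m : ℝ) ≤ (n : ℝ) := by exact_mod_cast hmn
  have hn0 : (0:ℝ) ≤ (n : ℝ) := Nat.cast_nonneg n
  have hqeq : qmax = ((2 + (n : ℝ) * (κ + 1) ^ n) / (σ ^ 2 / 2) ^ n) * D := by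
    rw [hqm]
    field_simp
  have hfin : (m : ℝ) * ((n : ℝ) * qmax) + (m : ℝ) * (2 * D)
      ≤ ((n : ℝ) ^ 2 * ((2 + (n : ℝ) * (κ + 1) ^ n) / (σ ^ 2 / 2) ^ n) + 2 * (n : ℝ)) * D := by
    have ha : (m : ℝ) * ((n : ℝ) * qmax) ≤ (n : ℝ) * ((n : ℝ) * qmax) :=
      mul_le_mul_of_nonneg_right hmn' (mul_nonneg hn0 hqmax0)
    have hb : (m : ℝ) * (2 * D) ≤ (n : ℝ) * (2 * D) :=
      mul_le_mul_of_nonneg_right hmn' (by linarith)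
    have hc : (n : ℝ) * ((n : ℝ) * qmax) + (n : ℝ) * (2 * D)
        = ((n : ℝ) ^ 2 * ((2 + (n : ℝ) * (κ + 1) ^ n) / (σ ^ 2 / 2) ^ n) + 2 * (n : ℝ)) * D := by
      rw [hqeq]
      ring
    nlinarith [ha, hb, hc]
  nlinarith [h1, h2, hfin]

end AuxDev12
section AuxDev13

open Finset

lemma offSq_nonneg {n : ℕ} (M : Matrix (Fin n) (Fin n) ℝ) : 0 ≤ offSq M := by
  refine Finset.sum_nonneg fun s _ => Finset.sum_nonneg fun t _ => ?_
  by_cases h : (s : ℕ) < (t : ℕ) <;> simp [h, sq_nonneg]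

/-- the global constant, depending only on `(n, ρ)` -/
noncomputable def CtotC (n : ℕ) (ρ : ℝ) : ℝ :=
  (n : ℝ) ^ 2
      * ((2 + (n : ℝ)
            * (2 ^ (n + 1) * ((n : ℝ) + 1) / ((ρ * gmin n) ^ 2 / 2) ^ n + 1) ^ n)
          / ((ρ * gmin n) ^ 2 / 2) ^ n)
    + 2 * (n : ℝ)

end AuxDev13
/-- Theorem 3.1: convergence bound for one sweep of the cyclic block
Jacobi method under any ordering from `B_c^(m)`, with `UBC_π(ρ)` transformations.
The constant `η` depends only on `(π,ρ)`; the constant `η̃ = ηt n ρ` only on `(n,ρ)`. -/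
theorem statement0 :
    ∃ ηt : ℕ → ℝ → ℝ,
      ∀ (n m : ℕ) (c : ℕ → ℕ) (ρ : ℝ),
        IsPartition n m c → 0 < ρ → ρ ≤ 1 →
        ∃ η : ℝ, 0 ≤ η ∧ η < ηt n ρ ∧ ηt n ρ < 1 ∧
          ∀ L : List (ℕ × ℕ), memBc m L →
            ∀ A A' : Matrix (Fin n) (Fin n) ℝ, A.IsSymm →
              Sweep c ρ L A A' → offSq A' ≤ η * offSq A := by
  refine ⟨fun n ρ => 1 - 1 / (2 * CtotC n ρ), ?_⟩
  intro n m c ρ hpart hρ0 hρ1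
  obtain ⟨hm2, hc1, hsum⟩ := hpart
  have hmn : m ≤ n := by
    calc m = ∑ _i ∈ Finset.range m, 1 := by simp
      _ ≤ ∑ i ∈ Finset.range m, c i :=
          Finset.sum_le_sum (fun i hi => hc1 i (Finset.mem_range.1 hi))
      _ = n := hsum
  have hn2 : 2 ≤ n := le_trans hm2 hmn
  set σv : ℝ := ρ * gmin n with hσv
  have hσv0 : 0 < σv := mul_pos hρ0 (gmin_pos (by omega))
  have hσv1 : σv ≤ 1 := by
    have hg1 := gmin_le_one hn2
    have hg0 := gmin_pos (show 1 ≤ n by omega)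
    rw [hσv]
    nlinarith
  have hCdef : CtotC n ρ
      = (n : ℝ) ^ 2
          * ((2 + (n : ℝ)
                * (2 ^ (n + 1) * ((n : ℝ) + 1) / (σv ^ 2 / 2) ^ n + 1) ^ n)
              / (σv ^ 2 / 2) ^ n)
        + 2 * (n : ℝ) := by
    rw [hσv]
    rfl
  have hβpos : 0 < (σv ^ 2 / 2) ^ n := by
    have h1 : 0 < σv ^ 2 := pow_pos hσv0 2
    have h2 : 0 < σv ^ 2 / 2 := by linarith
    exact pow_pos h2 n
  have hn0 : (0:ℝ) ≤ (n : ℝ) := Nat.cast_nonneg n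
  have hn2' : (2:ℝ) ≤ (n : ℝ) := by exact_mod_cast hn2
  have hC4 : (4:ℝ) ≤ CtotC n ρ := by
    rw [hCdef]
    have hterm : (0:ℝ) ≤ (n : ℝ) ^ 2
        * ((2 + (n : ℝ) * (2 ^ (n + 1) * ((n : ℝ) + 1) / (σv ^ 2 / 2) ^ n + 1) ^ n)
            / (σv ^ 2 / 2) ^ n) := by
      have h1 : (0:ℝ) ≤ (2 ^ (n + 1) * ((n : ℝ) + 1) / (σv ^ 2 / 2) ^ n + 1) ^ n := by
        positivity
      have h2 : (0:ℝ) ≤ 2 + (n : ℝ)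
          * (2 ^ (n + 1) * ((n : ℝ) + 1) / (σv ^ 2 / 2) ^ n + 1) ^ n := by
        nlinarith
      have h3 : (0:ℝ) ≤ (2 + (n : ℝ)
          * (2 ^ (n + 1) * ((n : ℝ) + 1) / (σv ^ 2 / 2) ^ n + 1) ^ n)
            / (σv ^ 2 / 2) ^ n := div_nonneg h2 (le_of_lt hβpos)
      positivity
    nlinarith
  have hCpos : (0:ℝ) < CtotC n ρ := by linarith
  refine ⟨1 - 1 / CtotC n ρ, ?_, ?_, ?_, ?_⟩
  · have h1 : 1 / CtotC n ρ ≤ 1 := by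
      rw [div_le_one hCpos]
      linarith
    linarith
  · have h1 : 1 / (2 * CtotC n ρ) < 1 / CtotC n ρ := by
      apply div_lt_div_of_pos_left one_pos hCpos
      linarith
    linarith
  · have h1 : 0 < 1 / (2 * CtotC n ρ) := by positivity
    linarith
  · intro L hL A A' hA hsweep
    obtain ⟨τ, hτ, hLdef⟩ := hL
    have hLform : L = (List.range' 1 (m - 1)).flatMap (Fcol τ) := hLdef
    have hconv : ∀ p ∈ L, ∀ U : Matrix (Fin n) (Fin n) ℝ,
        IsUBC2 c c ρ p.1 p.2 U → GoodStep n c σv p.1 p.2 U := by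
      intro p hp U hU
      have hpm : p.1 < p.2 ∧ p.2 ≤ m - 1 := by
        rw [hLform] at hp
        exact flat_mem hτ p hp
      have h2m : p.2 < m := by omega
      have h1m : p.1 < m := by omega
      have hci : c p.1 ≤ n := by
        rw [← hsum]
        exact Finset.single_le_sum (fun i _ => Nat.zero_le (c i)) (Finset.mem_range.2 h1m)
      have hcj : c p.2 ≤ n := by
        rw [← hsum]
        exact Finset.single_le_sum (fun i _ => Nat.zero_le (c i)) (Finset.mem_range.2 h2m)
      refine ubc_to_good (le_of_lt hσv0) ?_ hU
      have hγ := gamma_ge_gmin (c := c) hci hcj (hc1 p.2 h2m) (hc1 p.1 h1m)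
      rw [hσv]
      exact mul_le_mul_of_nonneg_left hγ (le_of_lt hρ0)
    have hchain : JChain c σv L A A' := sweep2_to_jchain L A A' hconv hsweep
    rw [hLform] at hchain
    have hgb := global_bound hτ hσv0 hσv1 hm2 hmn ⟨hm2, hc1, hsum⟩ hA hchain
    rw [← hCdef] at hgb
    -- conclude
    have h5 : offSq A / CtotC n ρ ≤ offSq A - offSq A' := by
      rw [div_le_iff₀ hCpos]
      calc offSq A ≤ CtotC n ρ * (offSq A - offSq A') := hgb
        _ = (offSq A - offSq A') * CtotC n ρ := by ring
    have h6 : (1 - 1 / CtotC n ρ) * offSq A = offSq A - offSq A / CtotC n ρ := by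
      field_simp
    linarith
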